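/- arXiv:2008.07428 — 3 statements merged into one kernel-verified Lean document; each statement's English description precedes it below -/
import Mathlib

section
/- Let W ∈ ℝ^{n×n} be a nonnegative, primitive, doubly stochastic matrix with positive diagonal entries, and let J := (1/n)𝟙_n𝟙_nᵀ. Then λ := ‖W − J‖ (spectral norm) satisfies λ ∈ [0,1), and for every x ∈ ℝ^n one has ‖Wx − Jx‖ ≤ λ‖x − Jx‖. -/
open Finset

private lemma sum_pos_exists {n : ℕ} (a : Fin n → ℝ) (hnn : ∀ k, 0 ≤ a k)
    (h : 0 < ∑ k, a k) : ∃ k, 0 < a k := by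
  by_contra hc
  push_neg at hc
  have : ∑ k, a k ≤ 0 := Finset.sum_nonpos fun k _ => hc k
  linarith

private lemma pow_entry_nonneg {n : ℕ} (W : Matrix (Fin n) (Fin n) ℝ)
    (hW : ∀ i j, 0 ≤ W i j) : ∀ m i j, 0 ≤ (W ^ m) i j := by
  intro m
  induction m with
  | zero =>
    intro i j
    rw [pow_zero]
    by_cases hij : i = j <;> simp [Matrix.one_apply, hij]
  | succ m ih =>
    intro i j
    rw [pow_succ, Matrix.mul_apply]
    exact Finset.sum_nonneg fun k _ => mul_nonneg (ih i k) (hW k j)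

private lemma eq_of_pow_pos {n : ℕ} (W : Matrix (Fin n) (Fin n) ℝ)
    (hWnn : ∀ i j, 0 ≤ W i j) (y : Fin n → ℝ)
    (hedge : ∀ i j, 0 < W i j → y i = y j) :
    ∀ m i j, 0 < (W ^ m) i j → y i = y j := by
  intro m
  induction m with
  | zero =>
    intro i j h
    rw [pow_zero] at h
    by_cases hij : i = j
    · rw [hij]
    · simp [Matrix.one_apply, hij] at h
  | succ m ih =>
    intro i j h
    rw [pow_succ', Matrix.mul_apply] at h
    obtain ⟨k, hk⟩ := sum_pos_exists _
      (fun k => mul_nonneg (hWnn i k) (pow_entry_nonneg W hWnn m k j)) h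
    have h1 : 0 < W i k := by
      rcases (hWnn i k).lt_or_eq with h1 | h1
      · exact h1
      · exfalso; rw [← h1, zero_mul] at hk; exact lt_irrefl 0 hk
    have h2 : 0 < (W ^ m) k j := by
      rcases (pow_entry_nonneg W hWnn m k j).lt_or_eq with h2 | h2
      · exact h2
      · exfalso; rw [← h2, mul_zero] at hk; exact lt_irrefl 0 hk
    exact (hedge i k h1).trans (ih k j h2)

/-- The key Perron–Frobenius-type strict contraction on mean-zero vectors. -/
private lemma key_contract {n : ℕ} (W : Matrix (Fin n) (Fin n) ℝ)
    (hWnonneg : ∀ i j, 0 ≤ W i j) (hWdiag : ∀ i, 0 < W i i)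
    (hWprim : ∃ k : ℕ, 0 < k ∧ ∀ i j, 0 < (W ^ k) i j)
    (hWrow : ∀ i, ∑ j, W i j = 1) (hWcol : ∀ j, ∑ i, W i j = 1)
    (y : Fin n → ℝ) (hy0 : ∑ i, y i = 0) (hy : y ≠ 0) :
    ∑ i, (W.mulVec y i) ^ 2 < ∑ i, (y i) ^ 2 := by
  classical
  set M : Fin n → Fin n → ℝ := fun j l => ∑ i, W i j * W i l with hM
  have hMnn : ∀ j l, 0 ≤ M j l := fun j l =>
    Finset.sum_nonneg fun i _ => mul_nonneg (hWnonneg i j) (hWnonneg i l)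
  have hMrow : ∀ j, ∑ l, M j l = 1 := by
    intro j
    rw [Finset.sum_comm]
    calc ∑ i, ∑ l, W i j * W i l = ∑ i, W i j * ∑ l, W i l := by
          simp [Finset.mul_sum]
      _ = 1 := by simp [hWrow, hWcol j]
  have hMcol : ∀ l, ∑ j, M j l = 1 := by
    intro l
    rw [Finset.sum_comm]
    calc ∑ i, ∑ j, W i j * W i l = ∑ i, (∑ j, W i j) * W i l := by
          simp [Finset.sum_mul]
      _ = 1 := by simp [hWrow, hWcol l]
  -- quadratic form identity
  have expand : ∑ i, (W.mulVec y i) ^ 2 = ∑ j, ∑ l, M j l * (y j * y l) := by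
    simp only [Matrix.mulVec, dotProduct, sq, hM, Finset.sum_mul_sum,
      Finset.sum_mul, Finset.mul_sum]
    rw [Finset.sum_comm]
    refine Finset.sum_congr rfl fun j _ => ?_
    rw [Finset.sum_comm]
    exact Finset.sum_congr rfl fun l _ => Finset.sum_congr rfl fun i _ => by ring
  set S : ℝ := ∑ j, ∑ l, M j l * (y j - y l) ^ 2 with hS
  have hSid : S = 2 * ∑ i, (y i) ^ 2 - 2 * ∑ i, (W.mulVec y i) ^ 2 := by
    have e1 : ∑ j, ∑ l, M j l * (y j) ^ 2 = ∑ j, (y j) ^ 2 := by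
      refine Finset.sum_congr rfl fun j _ => ?_
      rw [← Finset.sum_mul, hMrow j, one_mul]
    have e2 : ∑ j, ∑ l, M j l * (y l) ^ 2 = ∑ l, (y l) ^ 2 := by
      rw [Finset.sum_comm]
      refine Finset.sum_congr rfl fun l _ => ?_
      rw [← Finset.sum_mul, hMcol l, one_mul]
    have e3 : ∀ j l, M j l * (y j - y l) ^ 2
        = M j l * (y j) ^ 2 - 2 * (M j l * (y j * y l)) + M j l * (y l) ^ 2 := by
      intro j l; ring
    calc S = ∑ j, ∑ l, (M j l * (y j) ^ 2 - 2 * (M j l * (y j * y l)) + M j l * (y l) ^ 2) := by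
          rw [hS]; exact Finset.sum_congr rfl fun j _ => Finset.sum_congr rfl fun l _ => e3 j l
      _ = (∑ j, ∑ l, M j l * (y j) ^ 2) - 2 * (∑ j, ∑ l, M j l * (y j * y l))
            + ∑ j, ∑ l, M j l * (y l) ^ 2 := by
          simp [Finset.sum_add_distrib, Finset.sum_sub_distrib, Finset.mul_sum]
      _ = 2 * ∑ i, (y i) ^ 2 - 2 * ∑ i, (W.mulVec y i) ^ 2 := by
          rw [e1, e2, ← expand]; ring
  -- strict positivity of S
  have hSpos : 0 < S := by
    obtain ⟨i0, j0, hMij, hyij⟩ : ∃ i j, 0 < M i j ∧ y i ≠ y j := by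
      by_contra hc
      push_neg at hc
      have hedge : ∀ i j, 0 < W i j → y i = y j := by
        intro i j hij
        refine hc i j ?_
        refine Finset.sum_pos' (fun k _ => mul_nonneg (hWnonneg k i) (hWnonneg k j)) ?_
        exact ⟨i, Finset.mem_univ i, mul_pos (hWdiag i) hij⟩
      obtain ⟨k, hk, hkpos⟩ := hWprim
      have hconst : ∀ i j, y i = y j := fun i j =>
        eq_of_pow_pos W hWnonneg y hedge k i j (hkpos i j)
      obtain ⟨i1, hi1⟩ : ∃ i, y i ≠ 0 := by
        by_contra hall
        push_neg at hall
        exact hy (funext hall)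
      have : ∑ i, y i = ∑ _i : Fin n, y i1 := Finset.sum_congr rfl fun i _ => hconst i i1
      rw [Finset.sum_const, Finset.card_univ, Fintype.card_fin, nsmul_eq_mul] at this
      have hn0 : 0 < n := Fin.pos i1
      have : (n : ℝ) * y i1 = 0 := by rw [← this]; exact hy0
      rcases mul_eq_zero.mp this with h | h
      · exact absurd h (by positivity)
      · exact hi1 h
    have houter : ∀ j, 0 ≤ ∑ l, M j l * (y j - y l) ^ 2 := fun j =>
      Finset.sum_nonneg fun l _ => mul_nonneg (hMnn j l) (sq_nonneg _)
    refine Finset.sum_pos' (fun j _ => houter j) ⟨i0, Finset.mem_univ i0, ?_⟩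
    refine Finset.sum_pos' (fun l _ => mul_nonneg (hMnn i0 l) (sq_nonneg _)) ?_
    refine ⟨j0, Finset.mem_univ j0, mul_pos hMij ?_⟩
    have : y i0 - y j0 ≠ 0 := sub_ne_zero_of_ne hyij
    positivity
  linarith

/-- Strict pointwise contraction of `W - J` on nonzero vectors. -/
private lemma strict_lt {n : ℕ} (W : Matrix (Fin n) (Fin n) ℝ)
    (hWnonneg : ∀ i j, 0 ≤ W i j) (hWdiag : ∀ i, 0 < W i i)
    (hWprim : ∃ k : ℕ, 0 < k ∧ ∀ i j, 0 < (W ^ k) i j)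
    (hWrow : ∀ i, ∑ j, W i j = 1) (hWcol : ∀ j, ∑ i, W i j = 1)
    (x : EuclideanSpace ℝ (Fin n)) (hx : x ≠ 0) :
    ‖(Matrix.toEuclideanCLM (𝕜 := ℝ) (W - Matrix.of fun _ _ => (n : ℝ)⁻¹)) x‖ < ‖x‖ := by
  classical
  have hn : 0 < n := by
    rcases n with - | m
    · exact absurd (Subsingleton.elim x 0) hx
    · exact Nat.succ_pos m
  have hnR : (0 : ℝ) < n := by exact_mod_cast hn
  set a : ℝ := (n : ℝ)⁻¹ * ∑ j, x j with ha
  set y : Fin n → ℝ := fun j => x j - a with hy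
  have hsumy : ∑ i, y i = 0 := by
    simp only [hy, Finset.sum_sub_distrib, Finset.sum_const, Finset.card_univ,
      Fintype.card_fin, nsmul_eq_mul, ha]
    field_simp
    ring
  -- components of the image
  have hcomp : ∀ i, ((Matrix.toEuclideanCLM (𝕜 := ℝ)
      (W - Matrix.of fun _ _ => (n : ℝ)⁻¹)) x) i = W.mulVec y i := by
    intro i
    have h0 : ((Matrix.toEuclideanCLM (𝕜 := ℝ)
        (W - Matrix.of fun _ _ => (n : ℝ)⁻¹)) x) i
        = (W - Matrix.of fun _ _ => (n : ℝ)⁻¹).mulVec (fun j => x j) i := rfl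
    rw [h0]
    simp only [Matrix.mulVec, dotProduct, Matrix.sub_apply, Matrix.of_apply, hy,
      sub_mul, mul_sub]
    rw [Finset.sum_sub_distrib, Finset.sum_sub_distrib]
    have h1 : ∑ j, (n : ℝ)⁻¹ * x j = a := by rw [ha, Finset.mul_sum]
    have h2 : ∑ j, W i j * a = a := by
      rw [← Finset.sum_mul, hWrow i, one_mul]
    have h3 : ∑ _j : Fin n, (n : ℝ)⁻¹ * a = a := by
      rw [Finset.sum_const, Finset.card_univ, Fintype.card_fin, nsmul_eq_mul]
      field_simp
    rw [h1, h2]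
  -- compare sums of squares
  have hsum_le : ∑ i, (y i) ^ 2 ≤ ∑ i, (x i) ^ 2 := by
    have : ∑ i, (x i) ^ 2 - ∑ i, (y i) ^ 2 = (n : ℝ) * a ^ 2 := by
      simp only [hy]
      rw [← Finset.sum_sub_distrib]
      have : ∀ i, (x i) ^ 2 - (x i - a) ^ 2 = 2 * a * x i - a ^ 2 := fun i => by ring
      rw [Finset.sum_congr rfl fun i _ => this i, Finset.sum_sub_distrib,
        Finset.sum_const, Finset.card_univ, Fintype.card_fin, nsmul_eq_mul,
        ← Finset.mul_sum]
      have hsx : ∑ j, x j = n * a := by rw [ha]; field_simp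
      rw [hsx]; ring
    nlinarith [sq_nonneg a]
  have hnormx : ‖x‖ = Real.sqrt (∑ i, (x i) ^ 2) := by
    rw [EuclideanSpace.norm_eq]
    congr 1
    exact Finset.sum_congr rfl fun i _ => by rw [Real.norm_eq_abs, sq_abs]
  have hnormTx : ‖(Matrix.toEuclideanCLM (𝕜 := ℝ)
      (W - Matrix.of fun _ _ => (n : ℝ)⁻¹)) x‖ = Real.sqrt (∑ i, (W.mulVec y i) ^ 2) := by
    rw [EuclideanSpace.norm_eq]
    congr 1
    exact Finset.sum_congr rfl fun i _ => by rw [hcomp i, Real.norm_eq_abs, sq_abs]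
  by_cases hy0 : y = 0
  · have hmv : W.mulVec y = 0 := by rw [hy0, Matrix.mulVec_zero]
    rw [hnormTx]
    have hz : ∑ i, (W.mulVec y i) ^ 2 = 0 := by simp [hmv]
    rw [hz, Real.sqrt_zero]
    exact norm_pos_iff.mpr hx
  · have hkey := key_contract W hWnonneg hWdiag hWprim hWrow hWcol y hsumy hy0
    rw [hnormTx, hnormx]
    have h2 : ∑ i, (W.mulVec y i) ^ 2 < ∑ i, (x i) ^ 2 := lt_of_lt_of_le hkey hsum_le
    exact Real.sqrt_lt_sqrt (Finset.sum_nonneg fun i _ => sq_nonneg _) h2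

/-- The weight matrix is a contraction with factor `λ = ‖W - J‖ < 1`. -/
theorem weight_matrix_contraction (n : ℕ) (hn : 0 < n) (W : Matrix (Fin n) (Fin n) ℝ)
    (hWnonneg : ∀ i j, 0 ≤ W i j) (hWdiag : ∀ i, 0 < W i i)
    (hWprim : ∃ k : ℕ, 0 < k ∧ ∀ i j, 0 < (W ^ k) i j)
    (hWrow : ∀ i, ∑ j, W i j = 1) (hWcol : ∀ j, ∑ i, W i j = 1) :
    (0 : ℝ) ≤ ‖(Matrix.toEuclideanCLM (𝕜 := ℝ) (W - Matrix.of fun _ _ => (n : ℝ)⁻¹) :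
        EuclideanSpace ℝ (Fin n) →L[ℝ] EuclideanSpace ℝ (Fin n))‖ ∧
    ‖(Matrix.toEuclideanCLM (𝕜 := ℝ) (W - Matrix.of fun _ _ => (n : ℝ)⁻¹) :
        EuclideanSpace ℝ (Fin n) →L[ℝ] EuclideanSpace ℝ (Fin n))‖ < 1 ∧
    ∀ x : EuclideanSpace ℝ (Fin n),
      ‖Matrix.toEuclideanCLM (𝕜 := ℝ) W x -
          Matrix.toEuclideanCLM (𝕜 := ℝ) (Matrix.of fun _ _ => (n : ℝ)⁻¹) x‖
        ≤ ‖(Matrix.toEuclideanCLM (𝕜 := ℝ) (W - Matrix.of fun _ _ => (n : ℝ)⁻¹) :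
            EuclideanSpace ℝ (Fin n) →L[ℝ] EuclideanSpace ℝ (Fin n))‖ *
          ‖x - Matrix.toEuclideanCLM (𝕜 := ℝ) (Matrix.of fun _ _ => (n : ℝ)⁻¹) x‖ := by
  classical
  set J : Matrix (Fin n) (Fin n) ℝ := Matrix.of fun _ _ => (n : ℝ)⁻¹ with hJ
  set T : EuclideanSpace ℝ (Fin n) →L[ℝ] EuclideanSpace ℝ (Fin n) :=
    (Matrix.toEuclideanCLM (𝕜 := ℝ) (W - J) :
      EuclideanSpace ℝ (Fin n) →L[ℝ] EuclideanSpace ℝ (Fin n)) with hT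
  have hstrict : ∀ x : EuclideanSpace ℝ (Fin n), x ≠ 0 → ‖T x‖ < ‖x‖ :=
    fun x hx => strict_lt W hWnonneg hWdiag hWprim hWrow hWcol x hx
  refine ⟨norm_nonneg _, ?_, ?_⟩
  · -- ‖T‖ < 1 via compactness of the sphere
    have hnR : (0 : ℝ) < n := by exact_mod_cast hn
    set x0 : EuclideanSpace ℝ (Fin n) := EuclideanSpace.single ⟨0, hn⟩ (1 : ℝ) with hx0
    have hx0n : ‖x0‖ = 1 := by rw [hx0, EuclideanSpace.norm_single, norm_one]
    have hx0s : x0 ∈ Metric.sphere (0 : EuclideanSpace ℝ (Fin n)) 1 :=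
      mem_sphere_zero_iff_norm.mpr hx0n
    obtain ⟨z, hzs, hzmax⟩ := (isCompact_sphere (0 : EuclideanSpace ℝ (Fin n)) 1).exists_isMaxOn
      ⟨x0, hx0s⟩ ((T.continuous.norm).continuousOn (s := Metric.sphere 0 1))
    have hzn : ‖z‖ = 1 := mem_sphere_zero_iff_norm.mp hzs
    have hznz : z ≠ 0 := by
      intro h; rw [h, norm_zero] at hzn; norm_num at hzn
    have hbound : ‖T‖ ≤ ‖T z‖ := by
      refine ContinuousLinearMap.opNorm_le_bound T (norm_nonneg _) fun x => ?_
      by_cases hx : x = 0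
      · simp [hx]
      · have hxn : (0 : ℝ) < ‖x‖ := norm_pos_iff.mpr hx
        set u : EuclideanSpace ℝ (Fin n) := ‖x‖⁻¹ • x with hu
        have hun : ‖u‖ = 1 := by
          rw [hu, norm_smul, norm_inv, norm_norm, inv_mul_cancel₀ (ne_of_gt hxn)]
        have hus : u ∈ Metric.sphere (0 : EuclideanSpace ℝ (Fin n)) 1 :=
          mem_sphere_zero_iff_norm.mpr hun
        have := hzmax hus
        simp only [Set.mem_setOf_eq] at this
        have hTu : ‖T u‖ ≤ ‖T z‖ := this
        have : T x = ‖x‖ • T u := by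
          rw [hu, map_smul, smul_smul, mul_inv_cancel₀ (ne_of_gt hxn), one_smul]
        rw [this, norm_smul, norm_norm, mul_comm]
        exact mul_le_mul_of_nonneg_right hTu (le_of_lt hxn)
    calc ‖T‖ ≤ ‖T z‖ := hbound
      _ < ‖z‖ := hstrict z hznz
      _ = 1 := hzn
  · -- contraction inequality
    intro x
    have hmul : (W - J) * J = 0 := by
      ext i j
      simp only [Matrix.mul_apply, Matrix.sub_apply, hJ, Matrix.of_apply, Matrix.zero_apply,
        sub_mul]
      rw [Finset.sum_sub_distrib, ← Finset.sum_mul, hWrow i, one_mul, Finset.sum_const,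
        Finset.card_univ, Fintype.card_fin, nsmul_eq_mul]
      have hnR : (0 : ℝ) < n := by exact_mod_cast hn
      field_simp
      ring
    have hsub : Matrix.toEuclideanCLM (𝕜 := ℝ) W x -
        Matrix.toEuclideanCLM (𝕜 := ℝ) J x = T x := by
      rw [hT, map_sub]
      rfl
    have hTJ : T (Matrix.toEuclideanCLM (𝕜 := ℝ) J x) = 0 := by
      have h2 : T (Matrix.toEuclideanCLM (𝕜 := ℝ) J x) =
          Matrix.toEuclideanCLM (𝕜 := ℝ) ((W - J) * J) x := by
        rw [map_mul]; rfl
      rw [h2, hmul, map_zero]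
      rfl
    have hTx : T x = T (x - Matrix.toEuclideanCLM (𝕜 := ℝ) J x) := by
      rw [map_sub, hTJ, sub_zero]
    rw [hsub, hTx]
    exact T.le_opNorm _
end

section
/- Under the GT-SARAH setup, if 0 < α ≤ 1/(2L), then for every integer S ≥ 1: E[F(x̄^{q+1,S})] ≤ F(x̄^{0,1}) − (α/2) Σ_{s=1}^S Σ_{t=0}^q E[‖∇F(x̄^{t,s})‖²] − (α/4) Σ_{s=1}^S Σ_{t=0}^q E[‖v̄^{t,s}‖²] + α Σ_{s=1}^S Σ_{t=0}^q E[‖v̄^{t,s} − ∇f̄(x^{t,s})‖²] + αL² Σ_{s=1}^S Σ_{t=0}^q E[‖x^{t,s} − J x^{t,s}‖²/n]. -/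
open Finset
set_option linter.unusedSectionVars false
set_option maxHeartbeats 1000000
section aux
variable {E : Type*} [NormedAddCommGroup E] [InnerProductSpace ℝ E] [CompleteSpace E]

lemma hasGradientAt_const_mul_sum {ι : Type*} (s : Finset ι) (f : ι → E → ℝ) (c : ℝ)
    (x : E) (hf : ∀ j, DifferentiableAt ℝ (f j) x) :
    HasGradientAt (fun z => c * ∑ j ∈ s, f j z) (c • ∑ j ∈ s, gradient (f j) x) x := by
  have h1 : HasFDerivAt (fun z => ∑ j ∈ s, f j z)
      (∑ j ∈ s, InnerProductSpace.toDual ℝ E (gradient (f j) x)) x :=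
    HasFDerivAt.fun_sum fun j _ => ((hf j).hasGradientAt).hasFDerivAt
  have h2 := h1.const_mul c
  have h3 : c • ∑ j ∈ s, InnerProductSpace.toDual ℝ E (gradient (f j) x)
      = InnerProductSpace.toDual ℝ E (c • ∑ j ∈ s, gradient (f j) x) := by
    rw [map_smul, map_sum]
  rw [h3] at h2
  have h4 := h2.hasGradientAt
  rwa [LinearIsometryEquiv.symm_apply_apply] at h4

lemma norm_sq_sum_le {ι : Type*} (s : Finset ι) (a : ι → E) :
    ‖∑ j ∈ s, a j‖ ^ 2 ≤ (s.card : ℝ) * ∑ j ∈ s, ‖a j‖ ^ 2 := by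
  calc ‖∑ j ∈ s, a j‖ ^ 2 ≤ (∑ j ∈ s, ‖a j‖) ^ 2 := by
        apply pow_le_pow_left₀ (norm_nonneg _) (norm_sum_le _ _)
    _ ≤ (s.card : ℝ) * ∑ j ∈ s, ‖a j‖ ^ 2 := by
        exact_mod_cast sq_sum_le_card_mul_sum_sq (f := fun j => ‖a j‖) (s := s)

end aux

section descent
variable {E : Type*} [NormedAddCommGroup E] [InnerProductSpace ℝ E] [CompleteSpace E]

lemma descent_lemma (f : E → ℝ) (hf : Differentiable ℝ f) (L : ℝ) (hL : 0 ≤ L)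
    (hlip : ∀ u w, ‖gradient f u - gradient f w‖ ≤ L * ‖u - w‖) (a b : E) :
    f b ≤ f a + inner ℝ (gradient f a) (b - a) + L / 2 * ‖b - a‖ ^ 2 := by
  set d := b - a with hd
  set c1 : ℝ := inner ℝ (gradient f a) d with hc1
  set c2 : ℝ := L / 2 * ‖d‖ ^ 2 with hc2
  set g : ℝ → ℝ := fun t => f (a + t • d) - t * c1 - c2 * t ^ 2 with hg
  have hder : ∀ t : ℝ, HasDerivAt g
      ((inner ℝ (gradient f (a + t • d)) d : ℝ) - c1 - c2 * (2 * t)) t := by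
    intro t
    have hline : HasDerivAt (fun t : ℝ => a + t • d) d t := by
      simpa using ((hasDerivAt_id t).smul_const d).const_add a
    have hcomp : HasDerivAt (fun t : ℝ => f (a + t • d))
        (inner ℝ (gradient f (a + t • d)) d : ℝ) t := by
      have hg2 := (hf (a + t • d)).hasGradientAt.hasFDerivAt
      have := hg2.comp_hasDerivAt t hline
      simp only [InnerProductSpace.toDual_apply_apply] at this; exact this
    have h1 : HasDerivAt (fun t : ℝ => t * c1) c1 t := hasDerivAt_mul_const c1
    have h2 : HasDerivAt (fun t : ℝ => c2 * t ^ 2) (c2 * (2 * t)) t := by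
      simpa using (hasDerivAt_pow 2 t).const_mul c2
    exact (hcomp.sub h1).sub h2
  have hdiffg : Differentiable ℝ g := fun t => (hder t).differentiableAt
  have hmono : AntitoneOn g (Set.Icc 0 1) := by
    apply antitoneOn_of_deriv_nonpos (convex_Icc 0 1) hdiffg.continuous.continuousOn
      (hdiffg.differentiableOn)
    intro t ht
    rw [interior_Icc] at ht
    rw [(hder t).deriv]
    have hsub : (inner ℝ (gradient f (a + t • d)) d : ℝ) - c1
        = inner ℝ (gradient f (a + t • d) - gradient f a) d := by
      rw [inner_sub_left]
    have hb1 : (inner ℝ (gradient f (a + t • d) - gradient f a) d : ℝ)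
        ≤ ‖gradient f (a + t • d) - gradient f a‖ * ‖d‖ := real_inner_le_norm _ _
    have hb2 : ‖gradient f (a + t • d) - gradient f a‖ ≤ L * (t * ‖d‖) := by
      have := hlip (a + t • d) a
      simpa [norm_smul, abs_of_pos ht.1] using this
    have hd0 : (0:ℝ) ≤ ‖d‖ := norm_nonneg _
    nlinarith [ht.1.le, mul_le_mul_of_nonneg_right hb2 hd0]
  have h01 : g 1 ≤ g 0 := hmono (Set.mem_Icc.2 ⟨le_refl 0, zero_le_one⟩)
      (Set.mem_Icc.2 ⟨zero_le_one, le_refl 1⟩) zero_le_one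
  have hg0 : g 0 = f a := by simp [hg]
  have hg1 : g 1 = f b - c1 - c2 := by simp [hg, hd]
  rw [hg0, hg1] at h01
  rw [hc1, hc2] at h01
  linarith [h01]
end descent

section keystep
variable {E : Type*} [NormedAddCommGroup E] [InnerProductSpace ℝ E] [CompleteSpace E]

lemma key_step (f : E → ℝ) (hf : Differentiable ℝ f) (L α Z : ℝ) (hL : 0 < L) (hα : 0 < α)
    (hαL : α * L ≤ 1/2)
    (hlip : ∀ u w, ‖gradient f u - gradient f w‖ ≤ L * ‖u - w‖)
    (a v h : E) (hZ : ‖gradient f a - h‖ ^ 2 ≤ Z) :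
    f (a - α • v) ≤ f a - α/2 * ‖gradient f a‖^2 - α/4 * ‖v‖^2 + α * ‖v - h‖^2 + α * Z := by
  set g := gradient f a with hgdef
  have hdes := descent_lemma f hf L hL.le hlip a (a - α • v)
  have hba : a - α • v - a = -(α • v) := by abel
  rw [hba] at hdes
  have hin : (inner ℝ g (-(α • v)) : ℝ) = -(α * inner ℝ g v) := by
    rw [inner_neg_right, real_inner_smul_right]
  have hnn : ‖-(α • v)‖ ^ 2 = α^2 * ‖v‖^2 := by
    rw [norm_neg, norm_smul]; rw [mul_pow]; congr 1; exact sq_abs α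
  rw [hin, hnn] at hdes
  have e1 : (inner ℝ g v : ℝ) = (‖g‖^2 + ‖v‖^2 - ‖g - v‖^2) / 2 := by
    have := norm_sub_sq_real g v; linarith
  have e2 : ‖g - v‖^2 ≤ 2*‖g - h‖^2 + 2*‖v - h‖^2 := by
    have t1 : ‖g - v‖ ≤ ‖g - h‖ + ‖h - v‖ := by
      have : g - v = (g - h) + (h - v) := by abel
      rw [this]; exact norm_add_le _ _
    have t2 : ‖h - v‖ = ‖v - h‖ := norm_sub_rev _ _
    rw [t2] at t1
    nlinarith [norm_nonneg (g - v), norm_nonneg (g - h), norm_nonneg (v - h),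
      sq_nonneg (‖g - h‖ - ‖v - h‖)]
  have hv2 : L/2*(α^2 * ‖v‖^2) ≤ α/4*‖v‖^2 := by
    nlinarith [norm_nonneg v, sq_nonneg ‖v‖, hα.le]
  nlinarith [hdes, e1, e2, hZ, hα.le, sq_nonneg ‖v‖]
end keystep

section simple
open MeasureTheory
variable {Ω : Type*} [MeasurableSpace Ω]

/-- A measurable function with finite range. -/
def SF {γ : Type*} [MeasurableSpace γ] (g : Ω → γ) : Prop :=
  Measurable g ∧ (Set.range g).Finite

lemma SF.const {γ : Type*} [MeasurableSpace γ] (c : γ) : SF (fun _ : Ω => c) :=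
  ⟨measurable_const, (Set.finite_singleton c).subset (Set.range_subset_iff.2 fun _ => rfl)⟩

lemma SF.preimage {γ : Type*} [MeasurableSpace γ] [MeasurableSingletonClass γ]
    {g : Ω → γ} (hg : SF g) (T : Set γ) : MeasurableSet (g ⁻¹' T) := by
  have h1 : g ⁻¹' T = g ⁻¹' (T ∩ Set.range g) := by
    ext ω; simp [Set.mem_preimage, Set.mem_range]
  rw [h1]
  have hfin : (T ∩ Set.range g).Finite := hg.2.inter_of_right T
  have h2 : g ⁻¹' (T ∩ Set.range g) = ⋃ c ∈ hfin.toFinset, g ⁻¹' {c} := by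
    ext ω; simp
  rw [h2]
  exact hfin.toFinset.measurableSet_biUnion fun c _ => hg.1 (measurableSet_singleton c)

lemma SF.comp {γ δ : Type*} [MeasurableSpace γ] [MeasurableSingletonClass γ]
    [MeasurableSpace δ] {g : Ω → γ} (hg : SF g) (h : γ → δ) : SF (fun ω => h (g ω)) := by
  refine ⟨fun A _ => hg.preimage (h ⁻¹' A), ?_⟩
  have : Set.range (fun ω => h (g ω)) = h '' Set.range g := Set.range_comp h g
  rw [this]; exact hg.2.image h

lemma SF.pair {γ δ : Type*} [MeasurableSpace γ] [MeasurableSpace δ]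
    {g : Ω → γ} {g' : Ω → δ} (hg : SF g) (hg' : SF g') : SF (fun ω => (g ω, g' ω)) := by
  refine ⟨hg.1.prodMk hg'.1, (hg.2.prod hg'.2).subset ?_⟩
  rintro _ ⟨ω, rfl⟩; exact ⟨⟨ω, rfl⟩, ⟨ω, rfl⟩⟩

lemma SF.comp2 {γ δ ε : Type*} [MeasurableSpace γ] [MeasurableSingletonClass γ]
    [MeasurableSpace δ] [MeasurableSingletonClass δ] [MeasurableSpace ε]
    {g : Ω → γ} {g' : Ω → δ} (hg : SF g) (hg' : SF g') (h : γ → δ → ε) :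
    SF (fun ω => h (g ω) (g' ω)) :=
  (hg.pair hg').comp (fun z => h z.1 z.2)

lemma SF.sum {γ : Type*} [MeasurableSpace γ] [MeasurableSingletonClass γ]
    [AddCommMonoid γ] {ι : Type*} (s : Finset ι) (g : ι → Ω → γ)
    (hg : ∀ i ∈ s, SF (g i)) : SF (fun ω => ∑ i ∈ s, g i ω) := by
  classical
  induction s using Finset.induction_on with
  | empty => simpa using SF.const (0 : γ)
  | insert a s hni ih =>
    simp only [Finset.sum_insert hni]
    exact (hg a (Finset.mem_insert_self a s)).comp2
      (ih fun i hi => hg i (Finset.mem_insert_of_mem hi)) (· + ·)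

lemma SF.integrable (μ : Measure Ω) [IsFiniteMeasure μ] {g : Ω → ℝ} (hg : SF g) :
    Integrable g μ := by
  have hfin : (Set.range fun ω => ‖g ω‖).Finite := by
    have : Set.range (fun ω => ‖g ω‖) = (fun t : ℝ => ‖t‖) '' Set.range g := Set.range_comp _ g
    rw [this]; exact hg.2.image _
  obtain ⟨C, hC⟩ := hfin.bddAbove
  refine (integrable_const C).mono' hg.1.aestronglyMeasurable ?_
  exact Filter.Eventually.of_forall fun ω => hC ⟨ω, rfl⟩
end simple


open MeasureTheory Filter Finset ProbabilityTheory

/-- GT-SARAH setup. -/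
theorem gt_sarah_descent
    {Ω : Type*} [MeasurableSpace Ω] (μ : Measure Ω) [IsProbabilityMeasure μ]
    (n m p q B : ℕ) (hn : 1 ≤ n) (hm : 1 ≤ m) (hp : 1 ≤ p) (hq : 1 ≤ q)
    (hB1 : 1 ≤ B) (hBm : B ≤ m)
    (α L : ℝ) (hα0 : 0 < α) (hL : 0 < L)
    (f : Fin n → Fin m → EuclideanSpace ℝ (Fin p) → ℝ)
    (hdiff : ∀ i j, Differentiable ℝ (f i j))
    (hsmooth : ∀ i (u w : EuclideanSpace ℝ (Fin p)),
      (m : ℝ)⁻¹ * ∑ j, ‖gradient (f i j) u - gradient (f i j) w‖ ^ 2 ≤ L ^ 2 * ‖u - w‖ ^ 2)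
    (fI : Fin n → EuclideanSpace ℝ (Fin p) → ℝ)
    (hfI : ∀ i, fI i = fun z => (m : ℝ)⁻¹ * ∑ j, f i j z)
    (F : EuclideanSpace ℝ (Fin p) → ℝ)
    (hF : F = fun z => (n : ℝ)⁻¹ * ∑ i, fI i z)
    (Fstar : ℝ) (hFbdd : BddBelow (Set.range F)) (hFstar : Fstar = sInf (Set.range F))
    (W : Matrix (Fin n) (Fin n) ℝ)
    (hWnonneg : ∀ i r, 0 ≤ W i r) (hWdiag : ∀ i, 0 < W i i)
    (hWprim : ∃ k : ℕ, 0 < k ∧ ∀ i r, 0 < (W ^ k) i r)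
    (hWrow : ∀ i, ∑ r, W i r = 1) (hWcol : ∀ r, ∑ i, W i r = 1)
    (lam : ℝ)
    (hlam : lam = ‖(Matrix.toEuclideanCLM (𝕜 := ℝ) (W - Matrix.of fun _ _ => (n : ℝ)⁻¹) :
      EuclideanSpace ℝ (Fin n) →L[ℝ] EuclideanSpace ℝ (Fin n))‖)
    (hlam0 : 0 ≤ lam) (hlam1 : lam < 1)
    (τ : ℕ → ℕ → Fin n → Fin B → Ω → Fin m)
    (hτmeas : ∀ t s i l, Measurable (τ t s i l))
    (hτindep : ProbabilityTheory.iIndepFun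
      (fun idx : {u : ℕ × ℕ // 1 ≤ u.1 ∧ u.1 ≤ q ∧ 1 ≤ u.2} × Fin n × Fin B =>
        τ idx.1.1.1 idx.1.1.2 idx.2.1 idx.2.2) μ)
    (hτunif : ∀ t s (i : Fin n) (l : Fin B), 1 ≤ t → t ≤ q → 1 ≤ s → ∀ j : Fin m,
      μ (τ t s i l ⁻¹' {j}) = 1 / (m : ENNReal))
    (x y : ℕ → ℕ → Fin n → Ω → EuclideanSpace ℝ (Fin p))
    (v : ℤ → ℕ → Fin n → Ω → EuclideanSpace ℝ (Fin p))
    (x0 : EuclideanSpace ℝ (Fin p))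
    (hx0 : ∀ i ω, x 0 1 i ω = x0)
    (hy0 : ∀ i ω, y 0 1 i ω = 0)
    (hvm1 : ∀ i ω, v (-1) 1 i ω = 0)
    (hv0 : ∀ s, 1 ≤ s → ∀ i ω, v 0 s i ω = gradient (fI i) (x 0 s i ω))
    (hvrec : ∀ s, 1 ≤ s → ∀ t : ℕ, 1 ≤ t → t ≤ q → ∀ i ω,
      v (t : ℤ) s i ω = (B : ℝ)⁻¹ • (∑ l, (gradient (f i (τ t s i l ω)) (x t s i ω)
        - gradient (f i (τ t s i l ω)) (x (t - 1) s i ω))) + v ((t : ℤ) - 1) s i ω)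
    (hyrec : ∀ s, 1 ≤ s → ∀ t : ℕ, t ≤ q → ∀ i ω,
      y (t + 1) s i ω = (∑ r, W i r • y t s r ω) + v (t : ℤ) s i ω - v ((t : ℤ) - 1) s i ω)
    (hxrec : ∀ s, 1 ≤ s → ∀ t : ℕ, t ≤ q → ∀ i ω,
      x (t + 1) s i ω = (∑ r, W i r • x t s r ω) - α • y (t + 1) s i ω)
    (hxcarry : ∀ s, 1 ≤ s → ∀ i ω, x 0 (s + 1) i ω = x (q + 1) s i ω)
    (hycarry : ∀ s, 1 ≤ s → ∀ i ω, y 0 (s + 1) i ω = y (q + 1) s i ω)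
    (hvcarry : ∀ s, 1 ≤ s → ∀ i ω, v (-1) (s + 1) i ω = v (q : ℤ) s i ω)
    (hα2 : α ≤ 1 / (2 * L)) (S : ℕ) (hS : 1 ≤ S) :
    ∫ ω, F ((n : ℝ)⁻¹ • ∑ i, x (q + 1) S i ω) ∂μ
      ≤ F x0
        - (α / 2) * ∑ s ∈ Icc 1 S, ∑ t ∈ range (q + 1),
            ∫ ω, ‖gradient F ((n : ℝ)⁻¹ • ∑ i, x t s i ω)‖ ^ 2 ∂μ
        - (α / 4) * ∑ s ∈ Icc 1 S, ∑ t ∈ range (q + 1),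
            ∫ ω, ‖(n : ℝ)⁻¹ • ∑ i, v (t : ℤ) s i ω‖ ^ 2 ∂μ
        + α * ∑ s ∈ Icc 1 S, ∑ t ∈ range (q + 1),
            ∫ ω, ‖(n : ℝ)⁻¹ • ∑ i, v (t : ℤ) s i ω
              - (n : ℝ)⁻¹ • ∑ i, gradient (fI i) (x t s i ω)‖ ^ 2 ∂μ
        + α * L ^ 2 * ∑ s ∈ Icc 1 S, ∑ t ∈ range (q + 1),
            ∫ ω, (∑ i, ‖x t s i ω - (n : ℝ)⁻¹ • ∑ i', x t s i' ω‖ ^ 2) / (n : ℝ) ∂μ := by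

  classical
  have hn0 : (0:ℝ) < n := by exact_mod_cast hn
  have hm0 : (0:ℝ) < m := by exact_mod_cast hm
  have hαL : α * L ≤ 1/2 := by
    have h2L : (0:ℝ) < 2 * L := by positivity
    have := (le_div_iff₀ h2L).1 hα2
    nlinarith
  -- differentiability and gradient formulas
  have hdfI : ∀ i, Differentiable ℝ (fI i) := by
    intro i; rw [hfI i]
    exact (Differentiable.fun_sum (fun j _ => hdiff i j)).const_mul _
  have hdF : Differentiable ℝ F := by
    rw [hF]; exact (Differentiable.fun_sum (fun i _ => hdfI i)).const_mul _
  have hgradfI : ∀ i z, gradient (fI i) z = (m:ℝ)⁻¹ • ∑ j, gradient (f i j) z := by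
    intro i z
    rw [hfI i]
    exact (hasGradientAt_const_mul_sum Finset.univ (f i) (m:ℝ)⁻¹ z
      (fun j => (hdiff i j).differentiableAt)).gradient
  have hgradF : ∀ z, gradient F z = (n:ℝ)⁻¹ • ∑ i, gradient (fI i) z := by
    intro z
    rw [hF]
    exact (hasGradientAt_const_mul_sum Finset.univ fI (n:ℝ)⁻¹ z
      (fun i => (hdfI i).differentiableAt)).gradient
  have hsq_le : ∀ a b : ℝ, 0 ≤ a → 0 ≤ b → a^2 ≤ b^2 → a ≤ b := by
    intro a b ha hb h; nlinarith
  -- Lipschitz gradients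
  have hlipfI : ∀ i u w, ‖gradient (fI i) u - gradient (fI i) w‖ ≤ L * ‖u - w‖ := by
    intro i u w
    apply hsq_le _ _ (norm_nonneg _) (by positivity)
    have hdv : gradient (fI i) u - gradient (fI i) w
        = (m:ℝ)⁻¹ • ∑ j, (gradient (f i j) u - gradient (f i j) w) := by
      rw [hgradfI, hgradfI, ← smul_sub, ← Finset.sum_sub_distrib]
    rw [hdv, norm_smul, Real.norm_eq_abs, abs_of_pos (by positivity : (0:ℝ) < (m:ℝ)⁻¹),
      mul_pow]
    have h1 := norm_sq_sum_le Finset.univ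
      (fun j => gradient (f i j) u - gradient (f i j) w)
    rw [Finset.card_univ, Fintype.card_fin] at h1
    calc ((m:ℝ)⁻¹)^2 * ‖∑ j, (gradient (f i j) u - gradient (f i j) w)‖^2
        ≤ ((m:ℝ)⁻¹)^2 * ((m:ℝ) * ∑ j, ‖gradient (f i j) u - gradient (f i j) w‖^2) :=
          mul_le_mul_of_nonneg_left h1 (by positivity)
      _ = (m:ℝ)⁻¹ * ∑ j, ‖gradient (f i j) u - gradient (f i j) w‖^2 := by
          field_simp
      _ ≤ L^2 * ‖u - w‖^2 := hsmooth i u w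
      _ = (L * ‖u - w‖)^2 := by ring
  have hlipF : ∀ u w, ‖gradient F u - gradient F w‖ ≤ L * ‖u - w‖ := by
    intro u w
    have hdv : gradient F u - gradient F w
        = (n:ℝ)⁻¹ • ∑ i, (gradient (fI i) u - gradient (fI i) w) := by
      rw [hgradF, hgradF, ← smul_sub, ← Finset.sum_sub_distrib]
    rw [hdv, norm_smul, Real.norm_eq_abs, abs_of_pos (by positivity : (0:ℝ) < (n:ℝ)⁻¹)]
    have h1 : ‖∑ i, (gradient (fI i) u - gradient (fI i) w)‖ ≤ (n:ℝ) * (L * ‖u - w‖) := by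
      refine (norm_sum_le _ _).trans ?_
      calc ∑ i, ‖gradient (fI i) u - gradient (fI i) w‖ ≤ ∑ _i : Fin n, L * ‖u - w‖ :=
            Finset.sum_le_sum fun i _ => hlipfI i u w
        _ = (n:ℝ) * (L * ‖u - w‖) := by
            rw [Finset.sum_const, Finset.card_univ, Fintype.card_fin, nsmul_eq_mul]
    calc (n:ℝ)⁻¹ * ‖∑ i, (gradient (fI i) u - gradient (fI i) w)‖
        ≤ (n:ℝ)⁻¹ * ((n:ℝ) * (L * ‖u - w‖)) := mul_le_mul_of_nonneg_left h1 (by positivity)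
      _ = L * ‖u - w‖ := by field_simp
  -- consensus bound
  have hcons : ∀ (a : Fin n → EuclideanSpace ℝ (Fin p)) (b : EuclideanSpace ℝ (Fin p)),
      ‖gradient F b - (n:ℝ)⁻¹ • ∑ i, gradient (fI i) (a i)‖^2
        ≤ L^2 * ((∑ i, ‖a i - b‖^2) / (n:ℝ)) := by
    intro a b
    have hdv : gradient F b - (n:ℝ)⁻¹ • ∑ i, gradient (fI i) (a i)
        = (n:ℝ)⁻¹ • ∑ i, (gradient (fI i) b - gradient (fI i) (a i)) := by
      rw [hgradF, ← smul_sub, ← Finset.sum_sub_distrib]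
    rw [hdv, norm_smul, Real.norm_eq_abs, abs_of_pos (by positivity : (0:ℝ) < (n:ℝ)⁻¹),
      mul_pow]
    have h1 := norm_sq_sum_le Finset.univ (fun i => gradient (fI i) b - gradient (fI i) (a i))
    rw [Finset.card_univ, Fintype.card_fin] at h1
    have h2 : ∑ i, ‖gradient (fI i) b - gradient (fI i) (a i)‖^2
        ≤ ∑ i, L^2 * ‖a i - b‖^2 := by
      refine Finset.sum_le_sum fun i _ => ?_
      have h3 := hlipfI i b (a i)
      have h4 : ‖gradient (fI i) b - gradient (fI i) (a i)‖^2 ≤ (L * ‖b - a i‖)^2 :=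
        pow_le_pow_left₀ (norm_nonneg _) h3 2
      calc ‖gradient (fI i) b - gradient (fI i) (a i)‖^2 ≤ (L * ‖b - a i‖)^2 := h4
        _ = L^2 * ‖a i - b‖^2 := by rw [norm_sub_rev]; ring
    calc ((n:ℝ)⁻¹)^2 * ‖∑ i, (gradient (fI i) b - gradient (fI i) (a i))‖^2
        ≤ ((n:ℝ)⁻¹)^2 * ((n:ℝ) * ∑ i, ‖gradient (fI i) b - gradient (fI i) (a i)‖^2) :=
          mul_le_mul_of_nonneg_left h1 (by positivity)
      _ ≤ ((n:ℝ)⁻¹)^2 * ((n:ℝ) * ∑ i, L^2 * ‖a i - b‖^2) := by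
          refine mul_le_mul_of_nonneg_left (mul_le_mul_of_nonneg_left h2 (by positivity))
            (by positivity)
      _ = L^2 * ((∑ i, ‖a i - b‖^2) / (n:ℝ)) := by
          rw [← Finset.mul_sum]; field_simp
  -- averaged quantities
  set xb : ℕ → ℕ → Ω → EuclideanSpace ℝ (Fin p) :=
    fun t s ω => (n:ℝ)⁻¹ • ∑ i, x t s i ω with hxbdef
  set yb : ℕ → ℕ → Ω → EuclideanSpace ℝ (Fin p) :=
    fun t s ω => (n:ℝ)⁻¹ • ∑ i, y t s i ω with hybdef
  set vb : ℤ → ℕ → Ω → EuclideanSpace ℝ (Fin p) :=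
    fun t s ω => (n:ℝ)⁻¹ • ∑ i, v t s i ω with hvbdef
  set hb : ℕ → ℕ → Ω → EuclideanSpace ℝ (Fin p) :=
    fun t s ω => (n:ℝ)⁻¹ • ∑ i, gradient (fI i) (x t s i ω) with hhbdef
  have hmix : ∀ (z : Fin n → EuclideanSpace ℝ (Fin p)),
      ∑ i, ∑ r, W i r • z r = ∑ r, z r := by
    intro z
    rw [Finset.sum_comm]
    refine Finset.sum_congr rfl fun r _ => ?_
    rw [← Finset.sum_smul, hWcol r, one_smul]
  -- averaged dynamics
  have hybstep : ∀ s, 1 ≤ s → ∀ t : ℕ, t ≤ q → ∀ ω,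
      yb (t+1) s ω = yb t s ω + vb (t:ℤ) s ω - vb ((t:ℤ)-1) s ω := by
    intro s hs t ht ω
    have h1 : ∑ i, y (t+1) s i ω
        = ∑ i, ((∑ r, W i r • y t s r ω) + v (t:ℤ) s i ω - v ((t:ℤ)-1) s i ω) :=
      Finset.sum_congr rfl fun i _ => hyrec s hs t ht i ω
    simp only [hybdef, hvbdef, h1, Finset.sum_add_distrib, Finset.sum_sub_distrib,
      hmix (fun r => y t s r ω), smul_add, smul_sub]
  have hyv : ∀ s, 1 ≤ s → (∀ ω, yb 0 s ω = vb (-1) s ω) → ∀ t : ℕ, t ≤ q → ∀ ω,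
      yb (t+1) s ω = vb (t:ℤ) s ω := by
    intro s hs h0 t
    induction t with
    | zero =>
      intro _ ω
      have := hybstep s hs 0 (by omega) ω
      rw [h0 ω] at this
      rw [this]
      norm_num
    | succ t ih =>
      intro ht ω
      have h1 := hybstep s hs (t+1) ht ω
      rw [ih (by omega) ω] at h1
      rw [h1]
      have hcast : ((t:ℤ)+1) - 1 = (t:ℤ) := by ring
      push_cast
      rw [hcast]
      abel
  have hyv0 : ∀ s, 1 ≤ s → ∀ ω, yb 0 s ω = vb (-1) s ω := by
    intro s hs
    induction s, hs using Nat.le_induction with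
    | base =>
      intro ω
      simp only [hybdef, hvbdef]
      rw [Finset.sum_congr rfl fun i _ => hy0 i ω, Finset.sum_congr rfl fun i _ => hvm1 i ω]
    | succ s hs ih =>
      intro ω
      have h1 : yb 0 (s+1) ω = yb (q+1) s ω := by
        simp only [hybdef]
        rw [Finset.sum_congr rfl fun i _ => hycarry s hs i ω]
      have h2 : vb (-1) (s+1) ω = vb (q:ℤ) s ω := by
        simp only [hvbdef]
        rw [Finset.sum_congr rfl fun i _ => hvcarry s hs i ω]
      rw [h1, h2, hyv s hs ih q le_rfl ω]
  have hxstep : ∀ s, 1 ≤ s → ∀ t : ℕ, t ≤ q → ∀ ω,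
      xb (t+1) s ω = xb t s ω - α • vb (t:ℤ) s ω := by
    intro s hs t ht ω
    have h1 : ∑ i, x (t+1) s i ω
        = ∑ i, ((∑ r, W i r • x t s r ω) - α • y (t+1) s i ω) :=
      Finset.sum_congr rfl fun i _ => hxrec s hs t ht i ω
    have h2 : xb (t+1) s ω = xb t s ω - α • yb (t+1) s ω := by
      simp only [hxbdef, hybdef, h1, Finset.sum_sub_distrib, hmix (fun r => x t s r ω),
        smul_sub, ← Finset.smul_sum]
      rw [smul_comm α ((n:ℝ)⁻¹)]
    rw [h2, hyv s hs (hyv0 s hs) t ht ω]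
  -- per-step descent
  set D : ℕ → ℕ → Ω → ℝ := fun s t ω =>
    -(α/2) * ‖gradient F (xb t s ω)‖^2 +
      (-(α/4) * ‖vb (t:ℤ) s ω‖^2 +
        (α * ‖vb (t:ℤ) s ω - hb t s ω‖^2 +
          (α * L^2) * ((∑ i, ‖x t s i ω - xb t s ω‖^2) / (n:ℝ)))) with hDdef
  have hstep : ∀ s, 1 ≤ s → ∀ t : ℕ, t ≤ q → ∀ ω,
      F (xb (t+1) s ω) ≤ F (xb t s ω) + D s t ω := by
    intro s hs t ht ω
    rw [hxstep s hs t ht ω]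
    have hkey := key_step F hdF L α (L^2 * ((∑ i, ‖x t s i ω - xb t s ω‖^2) / (n:ℝ)))
      hL hα0 hαL hlipF (xb t s ω) (vb (t:ℤ) s ω) (hb t s ω)
      (hcons (fun i => x t s i ω) (xb t s ω))
    simp only [hDdef]
    ring_nf
    ring_nf at hkey
    linarith
  -- telescoping
  have htel1 : ∀ s, 1 ≤ s → ∀ T, T ≤ q+1 → ∀ ω,
      F (xb T s ω) ≤ F (xb 0 s ω) + ∑ t ∈ range T, D s t ω := by
    intro s hs T
    induction T with
    | zero => intro _ ω; simp
    | succ T ih =>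
      intro hT ω
      have h1 := ih (by omega) ω
      have h2 := hstep s hs T (by omega) ω
      rw [Finset.sum_range_succ]
      linarith
  have hxb01 : ∀ ω, xb 0 1 ω = x0 := by
    intro ω
    simp only [hxbdef]
    rw [Finset.sum_congr rfl fun i _ => hx0 i ω, Finset.sum_const, Finset.card_univ,
      Fintype.card_fin, ← Nat.cast_smul_eq_nsmul ℝ, smul_smul, inv_mul_cancel₀ hn0.ne',
      one_smul]
  have htel : ∀ s, 1 ≤ s → ∀ ω,
      F (xb (q+1) s ω) ≤ F x0 + ∑ s' ∈ Icc 1 s, ∑ t ∈ range (q+1), D s' t ω := by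
    intro s hs
    induction s, hs using Nat.le_induction with
    | base =>
      intro ω
      have h1 := htel1 1 le_rfl (q+1) le_rfl ω
      rw [hxb01 ω] at h1
      simpa using h1
    | succ s hs ih =>
      intro ω
      have h1 := htel1 (s+1) (by omega) (q+1) le_rfl ω
      have h2 : xb 0 (s+1) ω = xb (q+1) s ω := by
        simp only [hxbdef]
        rw [Finset.sum_congr rfl fun i _ => hxcarry s hs i ω]
      rw [h2] at h1
      have h3 := ih ω
      rw [Finset.sum_Icc_succ_top (by omega : 1 ≤ s+1)]
      linarith
  have hpt : ∀ ω, F (xb (q+1) S ω)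
      ≤ F x0 + ∑ s ∈ Icc 1 S, ∑ t ∈ range (q+1), D s t ω := htel S hS
  -- measurability: all iterates are simple functions
  have hSFτ : ∀ t s i l, SF (τ t s i l) := fun t s i l => ⟨hτmeas t s i l, Set.toFinite _⟩
  have hinner : ∀ s, 1 ≤ s → (∀ i, SF (x 0 s i)) → (∀ i, SF (y 0 s i)) →
      (∀ i, SF (v (-1) s i)) →
      ((∀ t, t ≤ q+1 → ∀ i, SF (x t s i) ∧ SF (y t s i)) ∧
        (∀ t : ℕ, t ≤ q → ∀ i, SF (v (t:ℤ) s i))) := by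
    intro s hs hx0' hy0' hv0'
    have hQ : ∀ t : ℕ, t ≤ q → (∀ i, SF (x t s i)) ∧ (∀ i, SF (y t s i))
        ∧ (∀ i, SF (v ((t:ℤ)-1) s i)) ∧ (∀ i, SF (v (t:ℤ) s i)) := by
      intro t
      induction t with
      | zero =>
        intro _
        refine ⟨hx0', hy0', fun i => ?_, fun i => ?_⟩
        · norm_num
          exact hv0' i
        · have heq : v ((0:ℕ):ℤ) s i = fun ω => gradient (fI i) (x 0 s i ω) := by
            funext ω
            push_cast
            exact hv0 s hs i ω
          rw [heq]
          exact (hx0' i).comp (fun z => gradient (fI i) z)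
      | succ t ih =>
        intro ht
        obtain ⟨hxt, hyt, hvtm, hvt⟩ := ih (by omega)
        have hidx : (((t+1:ℕ)):ℤ) - 1 = (t:ℤ) := by push_cast; ring
        have hy1 : ∀ i, SF (y (t+1) s i) := by
          intro i
          have heq : y (t+1) s i = fun ω => (∑ r, W i r • y t s r ω)
              + (v (t:ℤ) s i ω - v ((t:ℤ)-1) s i ω) := by
            funext ω
            rw [hyrec s hs t (by omega) i ω]
            abel
          rw [heq]
          have h1 : SF (fun ω => ∑ r, W i r • y t s r ω) :=
            SF.sum Finset.univ (fun r ω => W i r • y t s r ω)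
              (fun r _ => (hyt r).comp (fun z => W i r • z))
          have h2 : SF (fun ω => v (t:ℤ) s i ω - v ((t:ℤ)-1) s i ω) :=
            (hvt i).comp2 (hvtm i) (fun a b => a - b)
          exact h1.comp2 h2 (fun a b => a + b)
        have hx1 : ∀ i, SF (x (t+1) s i) := by
          intro i
          have heq : x (t+1) s i = fun ω => (∑ r, W i r • x t s r ω) - α • y (t+1) s i ω :=
            funext fun ω => hxrec s hs t (by omega) i ω
          rw [heq]
          have h1 : SF (fun ω => ∑ r, W i r • x t s r ω) :=
            SF.sum Finset.univ (fun r ω => W i r • x t s r ω)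
              (fun r _ => (hxt r).comp (fun z => W i r • z))
          exact h1.comp2 (hy1 i) (fun a b => a - α • b)
        have hv1 : ∀ i, SF (v ((t+1:ℕ):ℤ) s i) := by
          intro i
          have heq : v ((t+1:ℕ):ℤ) s i = fun ω => (B:ℝ)⁻¹ •
              (∑ l, (gradient (f i (τ (t+1) s i l ω)) (x (t+1) s i ω)
                - gradient (f i (τ (t+1) s i l ω)) (x t s i ω))) + v (t:ℤ) s i ω := by
            funext ω
            rw [hvrec s hs (t+1) (by omega) ht i ω]
            rw [hidx]
            norm_num
          rw [heq]
          have h1 : SF (fun ω => ∑ l, (gradient (f i (τ (t+1) s i l ω)) (x (t+1) s i ω)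
              - gradient (f i (τ (t+1) s i l ω)) (x t s i ω))) := by
            refine SF.sum Finset.univ _ (fun l _ => ?_)
            exact (hSFτ (t+1) s i l).comp2 ((hx1 i).pair (hxt i))
              (fun j z => gradient (f i j) z.1 - gradient (f i j) z.2)
          exact h1.comp2 (hvt i) (fun a b => (B:ℝ)⁻¹ • a + b)
        refine ⟨hx1, hy1, fun i => ?_, hv1⟩
        rw [hidx]
        exact hvt i
    obtain ⟨hxq, hyq, _, hvq⟩ := hQ q le_rfl
    have hyq1 : ∀ i, SF (y (q+1) s i) := by
      intro i
      have heq : y (q+1) s i = fun ω => (∑ r, W i r • y q s r ω)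
          + (v (q:ℤ) s i ω - v ((q:ℤ)-1) s i ω) := by
        funext ω
        rw [hyrec s hs q le_rfl i ω]
        abel
      rw [heq]
      have h1 : SF (fun ω => ∑ r, W i r • y q s r ω) :=
        SF.sum Finset.univ (fun r ω => W i r • y q s r ω)
          (fun r _ => (hyq r).comp (fun z => W i r • z))
      have h2 : SF (fun ω => v (q:ℤ) s i ω - v ((q:ℤ)-1) s i ω) :=
        (hvq i).comp2 ((hQ q le_rfl).2.2.1 i) (fun a b => a - b)
      exact h1.comp2 h2 (fun a b => a + b)
    have hxq1 : ∀ i, SF (x (q+1) s i) := by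
      intro i
      have heq : x (q+1) s i = fun ω => (∑ r, W i r • x q s r ω) - α • y (q+1) s i ω :=
        funext fun ω => hxrec s hs q le_rfl i ω
      rw [heq]
      have h1 : SF (fun ω => ∑ r, W i r • x q s r ω) :=
        SF.sum Finset.univ (fun r ω => W i r • x q s r ω)
          (fun r _ => (hxq r).comp (fun z => W i r • z))
      exact h1.comp2 (hyq1 i) (fun a b => a - α • b)
    refine ⟨fun t ht i => ?_, fun t ht i => (hQ t ht).2.2.2 i⟩
    rcases Nat.lt_or_ge t (q+1) with h | h
    · exact ⟨(hQ t (by omega)).1 i, (hQ t (by omega)).2.1 i⟩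
    · have : t = q + 1 := by omega
      subst this
      exact ⟨hxq1 i, hyq1 i⟩
  have houter : ∀ s, 1 ≤ s → (∀ i, SF (x 0 s i)) ∧ (∀ i, SF (y 0 s i)) ∧
      (∀ i, SF (v (-1) s i)) := by
    intro s hs
    induction s, hs using Nat.le_induction with
    | base =>
      refine ⟨fun i => ?_, fun i => ?_, fun i => ?_⟩
      · have : x 0 1 i = fun _ => x0 := funext (hx0 i)
        rw [this]; exact SF.const x0
      · have : y 0 1 i = fun _ => 0 := funext (hy0 i)
        rw [this]; exact SF.const 0
      · have : v (-1) 1 i = fun _ => 0 := funext (hvm1 i)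
        rw [this]; exact SF.const 0
    | succ s hs ih =>
      obtain ⟨hxs, hys, hvs⟩ := ih
      obtain ⟨hxy, hvv⟩ := hinner s hs hxs hys hvs
      refine ⟨fun i => ?_, fun i => ?_, fun i => ?_⟩
      · have : x 0 (s+1) i = x (q+1) s i := funext (hxcarry s hs i)
        rw [this]; exact (hxy (q+1) le_rfl i).1
      · have : y 0 (s+1) i = y (q+1) s i := funext (hycarry s hs i)
        rw [this]; exact (hxy (q+1) le_rfl i).2
      · have : v (-1) (s+1) i = v (q:ℤ) s i := funext (hvcarry s hs i)
        rw [this]; exact hvv q le_rfl i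
  have hSF : ∀ s, 1 ≤ s →
      ((∀ t, t ≤ q+1 → ∀ i, SF (x t s i)) ∧ (∀ t : ℕ, t ≤ q → ∀ i, SF (v (t:ℤ) s i))) := by
    intro s hs
    obtain ⟨h1, h2⟩ := hinner s hs (houter s hs).1 (houter s hs).2.1 (houter s hs).2.2
    exact ⟨fun t ht i => (h1 t ht i).1, h2⟩
  change ∫ ω, F (xb (q+1) S ω) ∂μ
      ≤ F x0
        - α / 2 * ∑ s ∈ Icc 1 S, ∑ t ∈ range (q + 1), ∫ ω, ‖gradient F (xb t s ω)‖ ^ 2 ∂μ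
        - α / 4 * ∑ s ∈ Icc 1 S, ∑ t ∈ range (q + 1), ∫ ω, ‖vb (t:ℤ) s ω‖ ^ 2 ∂μ
        + α * ∑ s ∈ Icc 1 S, ∑ t ∈ range (q + 1), ∫ ω, ‖vb (t:ℤ) s ω - hb t s ω‖ ^ 2 ∂μ
        + α * L ^ 2 * ∑ s ∈ Icc 1 S, ∑ t ∈ range (q + 1),
            ∫ ω, (∑ i, ‖x t s i ω - xb t s ω‖ ^ 2) / (n:ℝ) ∂μ
  have hSFxb : ∀ s, 1 ≤ s → ∀ t, t ≤ q+1 → SF (xb t s) := by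
    intro s hs t ht
    exact (SF.sum Finset.univ (fun i => x t s i)
      (fun i _ => (hSF s hs).1 t ht i)).comp (fun z => (n:ℝ)⁻¹ • z)
  have hSFvb : ∀ s, 1 ≤ s → ∀ t : ℕ, t ≤ q → SF (vb (t:ℤ) s) := by
    intro s hs t ht
    exact (SF.sum Finset.univ (fun i ω => v (t:ℤ) s i ω)
      (fun i _ => (hSF s hs).2 t ht i)).comp (fun z => (n:ℝ)⁻¹ • z)
  have hSFhb : ∀ s, 1 ≤ s → ∀ t : ℕ, t ≤ q → SF (hb t s) := by
    intro s hs t ht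
    exact (SF.sum Finset.univ (fun i ω => gradient (fI i) (x t s i ω))
      (fun i _ => ((hSF s hs).1 t (by omega) i).comp (fun z => gradient (fI i) z))).comp
      (fun z => (n:ℝ)⁻¹ • z)
  have hIA : ∀ s, 1 ≤ s → ∀ t : ℕ, t ≤ q →
      Integrable (fun ω => ‖gradient F (xb t s ω)‖^2) μ := fun s hs t ht =>
    SF.integrable μ ((hSFxb s hs t (by omega)).comp (fun z => ‖gradient F z‖^2))
  have hIB : ∀ s, 1 ≤ s → ∀ t : ℕ, t ≤ q →
      Integrable (fun ω => ‖vb (t:ℤ) s ω‖^2) μ := fun s hs t ht =>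
    SF.integrable μ ((hSFvb s hs t ht).comp (fun z => ‖z‖^2))
  have hIC : ∀ s, 1 ≤ s → ∀ t : ℕ, t ≤ q →
      Integrable (fun ω => ‖vb (t:ℤ) s ω - hb t s ω‖^2) μ := fun s hs t ht =>
    SF.integrable μ ((hSFvb s hs t ht).comp2 (hSFhb s hs t ht) (fun a b => ‖a - b‖^2))
  have hID : ∀ s, 1 ≤ s → ∀ t : ℕ, t ≤ q →
      Integrable (fun ω => (∑ i, ‖x t s i ω - xb t s ω‖^2) / (n:ℝ)) μ := by
    intro s hs t ht
    exact SF.integrable μ ((SF.sum Finset.univ (fun i ω => ‖x t s i ω - xb t s ω‖^2)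
      (fun i _ => ((hSF s hs).1 t (by omega) i).comp2 (hSFxb s hs t (by omega))
        (fun a b => ‖a - b‖^2))).comp (fun z => z / (n:ℝ)))
  have hIDfun : ∀ s, 1 ≤ s → ∀ t : ℕ, t ≤ q → Integrable (D s t) μ := by
    intro s hs t ht
    simp only [hDdef]
    exact ((hIA s hs t ht).const_mul _).add (((hIB s hs t ht).const_mul _).add
      (((hIC s hs t ht).const_mul _).add ((hID s hs t ht).const_mul _)))
  have hintDeq : ∀ s, 1 ≤ s → ∀ t : ℕ, t ≤ q → ∫ ω, D s t ω ∂μ =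
      -(α/2) * (∫ ω, ‖gradient F (xb t s ω)‖^2 ∂μ) +
        (-(α/4) * (∫ ω, ‖vb (t:ℤ) s ω‖^2 ∂μ) +
          (α * (∫ ω, ‖vb (t:ℤ) s ω - hb t s ω‖^2 ∂μ) +
            (α * L^2) * (∫ ω, (∑ i, ‖x t s i ω - xb t s ω‖^2) / (n:ℝ) ∂μ))) := by
    intro s hs t ht
    have i1 : Integrable (fun ω => -(α/2) * ‖gradient F (xb t s ω)‖^2) μ :=
      (hIA s hs t ht).const_mul _
    have i2 : Integrable (fun ω => -(α/4) * ‖vb (t:ℤ) s ω‖^2) μ :=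
      (hIB s hs t ht).const_mul _
    have i3 : Integrable (fun ω => α * ‖vb (t:ℤ) s ω - hb t s ω‖^2) μ :=
      (hIC s hs t ht).const_mul _
    have i4 : Integrable
        (fun ω => (α * L^2) * ((∑ i, ‖x t s i ω - xb t s ω‖^2) / (n:ℝ))) μ :=
      (hID s hs t ht).const_mul _
    have i34 : Integrable (fun ω => α * ‖vb (t:ℤ) s ω - hb t s ω‖^2 +
        (α * L^2) * ((∑ i, ‖x t s i ω - xb t s ω‖^2) / (n:ℝ))) μ := i3.add i4
    have i234 : Integrable (fun ω => -(α/4) * ‖vb (t:ℤ) s ω‖^2 +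
        (α * ‖vb (t:ℤ) s ω - hb t s ω‖^2 +
          (α * L^2) * ((∑ i, ‖x t s i ω - xb t s ω‖^2) / (n:ℝ)))) μ := i2.add i34
    simp only [hDdef]
    rw [integral_add i1 i234, integral_add i2 i34, integral_add i3 i4,
      integral_const_mul, integral_const_mul, integral_const_mul, integral_const_mul]
  have hLHSint : Integrable (fun ω => F (xb (q+1) S ω)) μ :=
    SF.integrable μ ((hSFxb S hS (q+1) le_rfl).comp F)
  have hSigint : Integrable (fun ω => ∑ s ∈ Icc 1 S, ∑ t ∈ range (q+1), D s t ω) μ :=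
    integrable_finset_sum _ fun s hsm => integrable_finset_sum _ fun t htm =>
      hIDfun s (Finset.mem_Icc.1 hsm).1 t (by have := Finset.mem_range.1 htm; omega)
  have hRHSint : Integrable
      (fun ω => F x0 + ∑ s ∈ Icc 1 S, ∑ t ∈ range (q+1), D s t ω) μ :=
    (integrable_const _).add hSigint
  calc ∫ ω, F (xb (q+1) S ω) ∂μ
      ≤ ∫ ω, (F x0 + ∑ s ∈ Icc 1 S, ∑ t ∈ range (q+1), D s t ω) ∂μ :=
        integral_mono hLHSint hRHSint hpt
    _ = F x0 + ∑ s ∈ Icc 1 S, ∑ t ∈ range (q+1), ∫ ω, D s t ω ∂μ := by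
        rw [integral_add (integrable_const _) hSigint, integral_const]
        simp only [probReal_univ, measure_univ, ENNReal.toReal_one, smul_eq_mul, one_mul]
        congr 1
        rw [integral_finset_sum _ (fun s hsm => integrable_finset_sum _ fun t htm =>
          hIDfun s (Finset.mem_Icc.1 hsm).1 t (by have := Finset.mem_range.1 htm; omega))]
        refine Finset.sum_congr rfl fun s hsm => ?_
        exact integral_finset_sum _ fun t htm =>
          hIDfun s (Finset.mem_Icc.1 hsm).1 t (by have := Finset.mem_range.1 htm; omega)
    _ = _ := by
        rw [Finset.sum_congr rfl (fun s hsm => Finset.sum_congr rfl (fun t htm =>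
          hintDeq s (Finset.mem_Icc.1 hsm).1 t
            (by have := Finset.mem_range.1 htm; omega)))]
        simp only [Finset.sum_add_distrib, ← Finset.mul_sum]
        ring
end

section
/- Under the GT-SARAH setup, for every s ≥ 1: Σ_{t=0}^q E[‖v̄^{t,s} − ∇f̄(x^{t,s})‖²] ≤ (3qα²L²/(nB)) Σ_{t=0}^{q−1} E[‖v̄^{t,s}‖²] + (6qL²/(nB)) Σ_{t=0}^q E[‖x^{t,s} − J x^{t,s}‖²/n]. -/
open MeasureTheory Finset ProbabilityTheory RealInnerProductSpace

section Aux
variable {Ω : Type*} [MeasurableSpace Ω] {μ : Measure Ω} [IsProbabilityMeasure μ]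

lemma comp_eq_sum_indicator {A E : Type*} [Fintype A] [DecidableEq A] [AddCommMonoid E]
    (Z : Ω → A) (G : A → E) (ω : Ω) :
    G (Z ω) = ∑ a : A, (Z ⁻¹' {a}).indicator (fun _ => G a) ω := by
  rw [Finset.sum_eq_single (Z ω)]
  · simp [Set.indicator_of_mem, Set.mem_preimage]
  · intro b _ hb
    exact Set.indicator_of_notMem (by simp [Ne.symm hb]) _
  · simp

lemma integrable_comp_finite {A : Type*} [Fintype A] [MeasurableSpace A]
    [MeasurableSingletonClass A]
    (Z : Ω → A) (hZ : Measurable Z) (G : A → ℝ) :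
    Integrable (fun ω => G (Z ω)) μ := by
  classical
  have : (fun ω => G (Z ω)) = fun ω => ∑ a : A, (Z ⁻¹' {a}).indicator (fun _ => G a) ω := by
    funext ω; exact comp_eq_sum_indicator Z G ω
  rw [this]
  exact integrable_finset_sum _ fun a _ =>
    (integrable_const (G a)).indicator (hZ (measurableSet_singleton a))

lemma integral_comp_finite {A : Type*} [Fintype A] [MeasurableSpace A]
    [MeasurableSingletonClass A]
    (Z : Ω → A) (hZ : Measurable Z) (G : A → ℝ) :
    ∫ ω, G (Z ω) ∂μ = ∑ a : A, (μ (Z ⁻¹' {a})).toReal * G a := by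
  classical
  have : (fun ω => G (Z ω)) = fun ω => ∑ a : A, (Z ⁻¹' {a}).indicator (fun _ => G a) ω := by
    funext ω; exact comp_eq_sum_indicator Z G ω
  rw [this, integral_finset_sum _ (fun a _ =>
    (integrable_const (G a)).indicator (hZ (measurableSet_singleton a)))]
  refine Finset.sum_congr rfl fun a _ => ?_
  rw [integral_indicator_const _ (hZ (measurableSet_singleton a)), smul_eq_mul, measureReal_def, mul_comm]

lemma integral_comp_pair {A : Type*} [Fintype A] [MeasurableSpace A]
    [MeasurableSingletonClass A] {m : ℕ} (hm : m ≠ 0)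
    (Z : Ω → A) (hZ : Measurable Z) (T : Ω → Fin m) (hT : Measurable T)
    (hind : IndepFun Z T μ) (hunif : ∀ j, μ (T ⁻¹' {j}) = 1 / (m : ENNReal))
    (G : A → Fin m → ℝ) :
    ∫ ω, G (Z ω) (T ω) ∂μ
      = ∑ a : A, (μ (Z ⁻¹' {a})).toReal * ((m : ℝ)⁻¹ * ∑ j, G a j) := by
  classical
  have hZT : Measurable (fun ω => (Z ω, T ω)) := hZ.prodMk hT
  have := integral_comp_finite (μ := μ) (fun ω => (Z ω, T ω)) hZT (fun ab => G ab.1 ab.2)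
  rw [this, Fintype.sum_prod_type]
  refine Finset.sum_congr rfl fun a _ => ?_
  rw [Finset.mul_sum, Finset.mul_sum]
  refine Finset.sum_congr rfl fun j _ => ?_
  have hpre : (fun ω => (Z ω, T ω)) ⁻¹' {(a, j)} = Z ⁻¹' {a} ∩ T ⁻¹' {j} := by
    ext ω; simp [Prod.ext_iff]
  rw [hpre, hind.measure_inter_preimage_eq_mul _ _ (measurableSet_singleton a)
    (measurableSet_singleton j), hunif j]
  rw [ENNReal.toReal_mul]
  have : ((1 : ENNReal) / m).toReal = (m : ℝ)⁻¹ := by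
    simp [ENNReal.toReal_inv]
  rw [this]; ring

end Aux

section HF
variable {Ω ι : Type*} {m : ℕ}

/-- `g` is a function of the variables `T k`, `k ∈ S`. -/
def HF (T : ι → Ω → Fin m) (S : Finset ι) {E : Type*} (g : Ω → E) : Prop :=
  ∃ G : ({k // k ∈ S} → Fin m) → E, ∀ ω, g ω = G (fun k => T k.1 ω)

variable {T : ι → Ω → Fin m}

lemma HF.const (S : Finset ι) {E : Type*} (c : E) : HF T S (fun _ => c) :=
  ⟨fun _ => c, fun _ => rfl⟩

lemma HF.mono {S S' : Finset ι} (hSS : S ⊆ S') {E : Type*} {g : Ω → E}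
    (hg : HF T S g) : HF T S' g := by
  obtain ⟨G, hG⟩ := hg
  exact ⟨fun z => G (fun k => z ⟨k.1, hSS k.2⟩), fun ω => hG ω⟩

lemma HF.comp {S : Finset ι} {E E' : Type*} {g : Ω → E} (hg : HF T S g) (φ : E → E') :
    HF T S (fun ω => φ (g ω)) := by
  obtain ⟨G, hG⟩ := hg
  exact ⟨fun z => φ (G z), fun ω => by show φ (g ω) = _; rw [hG ω]⟩

lemma HF.comp₂ {S : Finset ι} {E₁ E₂ E' : Type*} {g₁ : Ω → E₁} {g₂ : Ω → E₂}
    (h₁ : HF T S g₁) (h₂ : HF T S g₂) (φ : E₁ → E₂ → E') :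
    HF T S (fun ω => φ (g₁ ω) (g₂ ω)) := by
  obtain ⟨G₁, hG₁⟩ := h₁
  obtain ⟨G₂, hG₂⟩ := h₂
  exact ⟨fun z => φ (G₁ z) (G₂ z), fun ω => by
    show φ (g₁ ω) (g₂ ω) = _; rw [hG₁ ω, hG₂ ω]⟩

lemma HF.congr {S : Finset ι} {E : Type*} {g g' : Ω → E} (hg : HF T S g)
    (h : ∀ ω, g' ω = g ω) : HF T S g' := by
  obtain ⟨G, hG⟩ := hg
  exact ⟨G, fun ω => (h ω).trans (hG ω)⟩

lemma HF.sum {S : Finset ι} {E κ : Type*} [AddCommMonoid E] (A : Finset κ)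
    {g : κ → Ω → E} (h : ∀ j ∈ A, HF T S (g j)) :
    HF T S (fun ω => ∑ j ∈ A, g j ω) := by
  classical
  induction A using Finset.induction_on with
  | empty => exact (HF.const (T := T) S (0 : E)).congr (fun ω => by simp)
  | insert a A' hnot ih =>
      have h1 : HF T S (g a) := h a (Finset.mem_insert_self a A')
      have h2 : HF T S (fun ω => ∑ j ∈ A', g j ω) :=
        ih (fun j hj => h j (Finset.mem_insert_of_mem hj))
      exact (h1.comp₂ h2 (fun u v => u + v)).congr
        (fun ω => by rw [Finset.sum_insert hnot])

lemma HF.of_mem {k : ι} {S : Finset ι} (hk : k ∈ S) : HF T S (T k) :=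
  ⟨fun z => z ⟨k, hk⟩, fun _ => rfl⟩

end HF

section HFI
variable {Ω ι : Type*} [MeasurableSpace Ω] {μ : Measure Ω} [IsProbabilityMeasure μ] {m : ℕ}
  {T : ι → Ω → Fin m}

lemma HF.integrable {S : Finset ι} {g : Ω → ℝ} (hg : HF T S g)
    (hTmeas : ∀ k, Measurable (T k)) : Integrable g μ := by
  classical
  haveI : Fintype {k // k ∈ S} := FinsetCoe.fintype S
  obtain ⟨G, hG⟩ := hg
  have hZ : Measurable (fun ω (k : {k // k ∈ S}) => T k.1 ω) :=
    measurable_pi_lambda _ (fun k => hTmeas k.1)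
  have : g = fun ω => G (fun k => T k.1 ω) := funext hG
  rw [this]
  exact integrable_comp_finite _ hZ G

omit [IsProbabilityMeasure μ] in
lemma indep_of_not_mem
    (hindep : iIndepFun T μ)
    (hTmeas : ∀ k, Measurable (T k)) (S : Finset ι) (k0 : ι) (hk0 : k0 ∉ S) :
    IndepFun (fun ω (k : {k // k ∈ S}) => T k.1 ω) (T k0) μ := by
  have h := hindep.indepFun_finset S {k0}
    (by simpa [Finset.disjoint_singleton_right] using hk0) hTmeas
  have h2 := h.comp (φ := id)
    (ψ := fun z : {k // k ∈ ({k0} : Finset ι)} → Fin m => z ⟨k0, by simp⟩)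
    (_mγ' := inferInstance) measurable_id (measurable_pi_apply _)
  exact h2
end HFI

section HFEval
variable {Ω ι : Type*} [MeasurableSpace Ω] {μ : Measure Ω} [IsProbabilityMeasure μ] {m : ℕ}
  {T : ι → Ω → Fin m}

lemma hf_integral_eval (hm : m ≠ 0)
    (hindep : iIndepFun T μ)
    (hTmeas : ∀ k, Measurable (T k)) {S : Finset ι} {k0 : ι} (hk0 : k0 ∉ S)
    (hunif : ∀ j, μ (T k0 ⁻¹' {j}) = 1 / (m : ENNReal))
    {E : Type*} {g : Ω → E} (hg : HF T S g) (G : E → Fin m → ℝ) (φ : E → ℝ)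
    (hle : ∀ a, (m : ℝ)⁻¹ * ∑ j, G a j ≤ φ a) :
    ∫ ω, G (g ω) (T k0 ω) ∂μ ≤ ∫ ω, φ (g ω) ∂μ := by
  classical
  haveI : Fintype {k // k ∈ S} := FinsetCoe.fintype S
  obtain ⟨GG, hGG⟩ := hg
  set Z : Ω → ({k // k ∈ S} → Fin m) := fun ω k => T k.1 ω with hZdef
  have hZ : Measurable Z := measurable_pi_lambda _ (fun k => hTmeas k.1)
  have hind : IndepFun Z (T k0) μ := indep_of_not_mem hindep hTmeas S k0 hk0
  calc ∫ ω, G (g ω) (T k0 ω) ∂μ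
      = ∫ ω, G (GG (Z ω)) (T k0 ω) ∂μ := by
        refine integral_congr_ae (Filter.Eventually.of_forall fun ω => ?_)
        simp only [hGG ω, hZdef]
    _ = ∑ a, (μ (Z ⁻¹' {a})).toReal * ((m : ℝ)⁻¹ * ∑ j, G (GG a) j) :=
        integral_comp_pair hm Z hZ (T k0) (hTmeas k0) hind hunif (fun z j => G (GG z) j)
    _ ≤ ∑ a, (μ (Z ⁻¹' {a})).toReal * φ (GG a) :=
        Finset.sum_le_sum fun a _ =>
          mul_le_mul_of_nonneg_left (hle (GG a)) ENNReal.toReal_nonneg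
    _ = ∫ ω, φ (GG (Z ω)) ∂μ := (integral_comp_finite Z hZ (fun z => φ (GG z))).symm
    _ = ∫ ω, φ (g ω) ∂μ := by
        refine integral_congr_ae (Filter.Eventually.of_forall fun ω => ?_)
        simp only [hGG ω, hZdef]

lemma hf_integral_zero (hm : m ≠ 0)
    (hindep : iIndepFun T μ)
    (hTmeas : ∀ k, Measurable (T k)) {S : Finset ι} {k0 : ι} (hk0 : k0 ∉ S)
    (hunif : ∀ j, μ (T k0 ⁻¹' {j}) = 1 / (m : ENNReal))
    {E : Type*} {g : Ω → E} (hg : HF T S g) (G : E → Fin m → ℝ)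
    (hzero : ∀ a, ∑ j, G a j = 0) :
    ∫ ω, G (g ω) (T k0 ω) ∂μ = 0 := by
  have hle := hf_integral_eval hm hindep hTmeas hk0 hunif hg G (fun _ => (0:ℝ))
    (fun a => by rw [hzero a]; simp)
  have hge := hf_integral_eval hm hindep hTmeas hk0 hunif hg (fun a j => - G a j)
    (fun _ => (0:ℝ)) (fun a => by rw [Finset.sum_neg_distrib, hzero a]; simp)
  simp only [integral_const, smul_zero, measure_univ] at hle hge
  have : ∫ ω, -G (g ω) (T k0 ω) ∂μ = - ∫ ω, G (g ω) (T k0 ω) ∂μ := integral_neg _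
  rw [this] at hge
  linarith [hle, hge]

end HFEval

section Det
variable {F : Type*} [NormedAddCommGroup F] [InnerProductSpace ℝ F] [CompleteSpace F]

lemma gradient_const_mul_sum {m : ℕ} (f : Fin m → F → ℝ)
    (hdiff : ∀ j, Differentiable ℝ (f j)) (c : ℝ) (u : F) :
    gradient (fun z => c * ∑ j, f j z) u = c • ∑ j, gradient (f j) u := by
  have hds : DifferentiableAt ℝ (fun z => ∑ j, f j z) u :=
    DifferentiableAt.fun_sum (fun j _ => (hdiff j).differentiableAt)
  unfold gradient
  rw [fderiv_const_mul hds c, fderiv_fun_sum (fun j _ => (hdiff j).differentiableAt),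
    _root_.map_smul, map_sum]

lemma avg_var_le {m : ℕ} (hm : m ≠ 0) (a : Fin m → F) :
    (m : ℝ)⁻¹ * ∑ j, ‖a j - (m : ℝ)⁻¹ • ∑ j', a j'‖ ^ 2
      ≤ (m : ℝ)⁻¹ * ∑ j, ‖a j‖ ^ 2 := by
  have hm' : (0:ℝ) < m := by
    have := Nat.pos_of_ne_zero hm; exact_mod_cast this
  set c : F := (m : ℝ)⁻¹ • ∑ j', a j' with hc
  have hsum : ∑ j', a j' = (m : ℝ) • c := by
    rw [hc, smul_smul, mul_inv_cancel₀ (ne_of_gt hm'), one_smul]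
  refine mul_le_mul_of_nonneg_left ?_ (by positivity)
  have expand : ∀ j, ‖a j - c‖ ^ 2 = ‖a j‖ ^ 2 - 2 * ⟪a j, c⟫ + ‖c‖ ^ 2 := by
    intro j
    rw [norm_sub_sq_real]
  calc ∑ j, ‖a j - c‖ ^ 2 = ∑ j, (‖a j‖ ^ 2 - 2 * ⟪a j, c⟫ + ‖c‖ ^ 2) :=
        Finset.sum_congr rfl fun j _ => expand j
    _ = (∑ j, ‖a j‖ ^ 2) - 2 * ⟪∑ j', a j', c⟫ + (m : ℝ) * ‖c‖ ^ 2 := by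
        rw [Finset.sum_add_distrib, Finset.sum_sub_distrib, sum_inner, Finset.mul_sum,
          Finset.sum_const, Finset.card_univ, Fintype.card_fin, nsmul_eq_mul]
        try ring
    _ = (∑ j, ‖a j‖ ^ 2) - (m : ℝ) * ‖c‖ ^ 2 := by
        rw [hsum, real_inner_smul_left, real_inner_self_eq_norm_sq]
        try ring
    _ ≤ ∑ j, ‖a j‖ ^ 2 := by nlinarith [sq_nonneg ‖c‖]

lemma norm_add3_sq_le (a b c : F) : ‖a + b + c‖ ^ 2 ≤ 3 * (‖a‖ ^ 2 + ‖b‖ ^ 2 + ‖c‖ ^ 2) := by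
  have h1 := norm_add_le (a + b) c
  have h2 := norm_add_le a b
  have h3 : ‖a + b + c‖ ^ 2 ≤ (‖a‖ + ‖b‖ + ‖c‖) ^ 2 := by
    have h4 : ‖a + b + c‖ ≤ ‖a‖ + ‖b‖ + ‖c‖ := by linarith
    exact pow_le_pow_left₀ (norm_nonneg _) h4 2
  nlinarith [sq_nonneg (‖a‖ - ‖b‖), sq_nonneg (‖a‖ - ‖c‖), sq_nonneg (‖b‖ - ‖c‖)]

end Det

set_option maxHeartbeats 4000000 in
open RealInnerProductSpace in
/-- GT-SARAH setup. -/
theorem gt_sarah_vr_sum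
    {Ω : Type*} [MeasurableSpace Ω] (μ : Measure Ω) [IsProbabilityMeasure μ]
    (n m p q B : ℕ) (hn : 1 ≤ n) (hm : 1 ≤ m) (hp : 1 ≤ p) (hq : 1 ≤ q)
    (hB1 : 1 ≤ B) (hBm : B ≤ m)
    (α L : ℝ) (hα0 : 0 < α) (hL : 0 < L)
    (f : Fin n → Fin m → EuclideanSpace ℝ (Fin p) → ℝ)
    (hdiff : ∀ i j, Differentiable ℝ (f i j))
    (hsmooth : ∀ i (u w : EuclideanSpace ℝ (Fin p)),
      (m : ℝ)⁻¹ * ∑ j, ‖gradient (f i j) u - gradient (f i j) w‖ ^ 2 ≤ L ^ 2 * ‖u - w‖ ^ 2)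
    (fI : Fin n → EuclideanSpace ℝ (Fin p) → ℝ)
    (hfI : ∀ i, fI i = fun z => (m : ℝ)⁻¹ * ∑ j, f i j z)
    (F : EuclideanSpace ℝ (Fin p) → ℝ)
    (hF : F = fun z => (n : ℝ)⁻¹ * ∑ i, fI i z)
    (Fstar : ℝ) (hFbdd : BddBelow (Set.range F)) (hFstar : Fstar = sInf (Set.range F))
    (W : Matrix (Fin n) (Fin n) ℝ)
    (hWnonneg : ∀ i r, 0 ≤ W i r) (hWdiag : ∀ i, 0 < W i i)
    (hWprim : ∃ k : ℕ, 0 < k ∧ ∀ i r, 0 < (W ^ k) i r)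
    (hWrow : ∀ i, ∑ r, W i r = 1) (hWcol : ∀ r, ∑ i, W i r = 1)
    (lam : ℝ)
    (hlam : lam = ‖(Matrix.toEuclideanCLM (𝕜 := ℝ) (W - Matrix.of fun _ _ => (n : ℝ)⁻¹) :
      EuclideanSpace ℝ (Fin n) →L[ℝ] EuclideanSpace ℝ (Fin n))‖)
    (hlam0 : 0 ≤ lam) (hlam1 : lam < 1)
    (τ : ℕ → ℕ → Fin n → Fin B → Ω → Fin m)
    (hτmeas : ∀ t s i l, Measurable (τ t s i l))
    (hτindep : ProbabilityTheory.iIndepFun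
      (fun idx : {u : ℕ × ℕ // 1 ≤ u.1 ∧ u.1 ≤ q ∧ 1 ≤ u.2} × Fin n × Fin B =>
        τ idx.1.1.1 idx.1.1.2 idx.2.1 idx.2.2) μ)
    (hτunif : ∀ t s (i : Fin n) (l : Fin B), 1 ≤ t → t ≤ q → 1 ≤ s → ∀ j : Fin m,
      μ (τ t s i l ⁻¹' {j}) = 1 / (m : ENNReal))
    (x y : ℕ → ℕ → Fin n → Ω → EuclideanSpace ℝ (Fin p))
    (v : ℤ → ℕ → Fin n → Ω → EuclideanSpace ℝ (Fin p))
    (x0 : EuclideanSpace ℝ (Fin p))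
    (hx0 : ∀ i ω, x 0 1 i ω = x0)
    (hy0 : ∀ i ω, y 0 1 i ω = 0)
    (hvm1 : ∀ i ω, v (-1) 1 i ω = 0)
    (hv0 : ∀ s, 1 ≤ s → ∀ i ω, v 0 s i ω = gradient (fI i) (x 0 s i ω))
    (hvrec : ∀ s, 1 ≤ s → ∀ t : ℕ, 1 ≤ t → t ≤ q → ∀ i ω,
      v (t : ℤ) s i ω = (B : ℝ)⁻¹ • (∑ l, (gradient (f i (τ t s i l ω)) (x t s i ω)
        - gradient (f i (τ t s i l ω)) (x (t - 1) s i ω))) + v ((t : ℤ) - 1) s i ω)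
    (hyrec : ∀ s, 1 ≤ s → ∀ t : ℕ, t ≤ q → ∀ i ω,
      y (t + 1) s i ω = (∑ r, W i r • y t s r ω) + v (t : ℤ) s i ω - v ((t : ℤ) - 1) s i ω)
    (hxrec : ∀ s, 1 ≤ s → ∀ t : ℕ, t ≤ q → ∀ i ω,
      x (t + 1) s i ω = (∑ r, W i r • x t s r ω) - α • y (t + 1) s i ω)
    (hxcarry : ∀ s, 1 ≤ s → ∀ i ω, x 0 (s + 1) i ω = x (q + 1) s i ω)
    (hycarry : ∀ s, 1 ≤ s → ∀ i ω, y 0 (s + 1) i ω = y (q + 1) s i ω)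
    (hvcarry : ∀ s, 1 ≤ s → ∀ i ω, v (-1) (s + 1) i ω = v (q : ℤ) s i ω)
    :
    ∀ s : ℕ, 1 ≤ s →
      ∑ t ∈ range (q + 1), ∫ ω, ‖(n : ℝ)⁻¹ • ∑ i, v (t : ℤ) s i ω
          - (n : ℝ)⁻¹ • ∑ i, gradient (fI i) (x t s i ω)‖ ^ 2 ∂μ
        ≤ (3 * q * α ^ 2 * L ^ 2 / (n * B)) *
            ∑ t ∈ range q, ∫ ω, ‖(n : ℝ)⁻¹ • ∑ i, v (t : ℤ) s i ω‖ ^ 2 ∂μ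
          + (6 * q * L ^ 2 / (n * B)) * ∑ t ∈ range (q + 1),
              ∫ ω, (∑ i, ‖x t s i ω - (n : ℝ)⁻¹ • ∑ i', x t s i' ω‖ ^ 2) / (n : ℝ) ∂μ := by
  classical
  intro s hs
  have hmN : m ≠ 0 := by omega
  have hmR : (m : ℝ) ≠ 0 := Nat.cast_ne_zero.mpr hmN
  have hnR : (n : ℝ) ≠ 0 := Nat.cast_ne_zero.mpr (by omega)
  have hBR : (B : ℝ) ≠ 0 := Nat.cast_ne_zero.mpr (by omega)
  set T : ({u : ℕ × ℕ // 1 ≤ u.1 ∧ u.1 ≤ q ∧ 1 ≤ u.2} × Fin n × Fin B) → Ω → Fin m :=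
    fun k => τ k.1.1.1 k.1.1.2 k.2.1 k.2.2 with hTdef
  have hTmeas : ∀ k, Measurable (T k) := fun k => hτmeas _ _ _ _
  have hTindep : iIndepFun T μ := hτindep
  set SN : ℕ → Finset ({u : ℕ × ℕ // 1 ≤ u.1 ∧ u.1 ≤ q ∧ 1 ≤ u.2} × Fin n × Fin B) :=
    fun N => (((Finset.Icc 1 q ×ˢ Finset.Icc 1 N).filter
        (fun u : ℕ × ℕ => (u.2 - 1) * q + u.1 ≤ N)).subtype
          (fun u => 1 ≤ u.1 ∧ u.1 ≤ q ∧ 1 ≤ u.2)) ×ˢ (Finset.univ) with hSNdef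
  have mem_SN : ∀ (k) (N : ℕ), k ∈ SN N ↔ (k.1.1.2 - 1) * q + k.1.1.1 ≤ N := by
    rintro ⟨⟨⟨t', s'⟩, ht1, ht2, ht3⟩, il⟩ N
    simp only [hSNdef, Finset.mem_product, Finset.mem_subtype, Finset.mem_filter,
      Finset.mem_Icc, Finset.mem_univ, and_true]
    constructor
    · rintro ⟨_, hord⟩; exact hord
    · intro hord
      refine ⟨⟨⟨ht1, ht2⟩, ht3, ?_⟩, hord⟩
      have hle : s' - 1 ≤ (s' - 1) * q := Nat.le_mul_of_pos_right _ (by omega)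
      omega
  have SN_mono : ∀ {N N' : ℕ}, N ≤ N' → SN N ⊆ SN N' := by
    intro N N' h k hk
    rw [mem_SN] at hk ⊢
    omega
  have hfτ : ∀ (t' s' : ℕ) (h1 : 1 ≤ t') (h2 : t' ≤ q) (h3 : 1 ≤ s') (i : Fin n) (l : Fin B)
      (N : ℕ), (s' - 1) * q + t' ≤ N → HF T (SN N) (τ t' s' i l) := by
    intro t' s' h1 h2 h3 i l N hN
    exact HF.of_mem (k := (⟨(t', s'), h1, h2, h3⟩, i, l)) ((mem_SN _ _).2 hN)
  -- within-epoch representation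
  have step : ∀ s' : ℕ, 1 ≤ s' →
      (∀ i, HF T (SN ((s' - 1) * q)) (x 0 s' i) ∧ HF T (SN ((s' - 1) * q)) (y 0 s' i) ∧
        HF T (SN ((s' - 1) * q)) (v (-1) s' i)) →
      ∀ t : ℕ, t ≤ q → ∀ i,
        HF T (SN ((s' - 1) * q + t)) (v (t : ℤ) s' i) ∧
        HF T (SN ((s' - 1) * q + t)) (x t s' i) ∧
        HF T (SN ((s' - 1) * q + t)) (y t s' i) ∧
        HF T (SN ((s' - 1) * q + t)) (x (t + 1) s' i) ∧
        HF T (SN ((s' - 1) * q + t)) (y (t + 1) s' i) := by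
    intro s' hs' hbase t
    induction t with
    | zero =>
        intro _ i
        have hx0' : ∀ j, HF T (SN ((s' - 1) * q)) (x 0 s' j) := fun j => (hbase j).1
        have hy0' : ∀ j, HF T (SN ((s' - 1) * q)) (y 0 s' j) := fun j => (hbase j).2.1
        have hvm' : ∀ j, HF T (SN ((s' - 1) * q)) (v (-1) s' j) := fun j => (hbase j).2.2
        have hv0' : ∀ j, HF T (SN ((s' - 1) * q)) (v 0 s' j) := fun j =>
          ((hx0' j).comp (fun u => gradient (fI j) u)).congr (fun ω => hv0 s' hs' j ω)
        have hy1 : ∀ j, HF T (SN ((s' - 1) * q)) (y 1 s' j) := by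
          intro j
          have hsum : HF T (SN ((s' - 1) * q)) (fun ω => ∑ r, W j r • y 0 s' r ω) :=
            HF.sum Finset.univ (fun r _ => (hy0' r).comp (fun u => W j r • u))
          have hh := (hsum.comp₂ (hv0' j) (fun u w => u + w)).comp₂ (hvm' j) (fun u w => u - w)
          refine hh.congr (fun ω => ?_)
          have h := hyrec s' hs' 0 (by omega) j ω
          simpa using h
        have hx1 : ∀ j, HF T (SN ((s' - 1) * q)) (x 1 s' j) := by
          intro j
          have hsum : HF T (SN ((s' - 1) * q)) (fun ω => ∑ r, W j r • x 0 s' r ω) :=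
            HF.sum Finset.univ (fun r _ => (hx0' r).comp (fun u => W j r • u))
          have hh := hsum.comp₂ (hy1 j) (fun u w => u - α • w)
          refine hh.congr (fun ω => ?_)
          simpa using hxrec s' hs' 0 (by omega) j ω
        exact ⟨hv0' i, hx0' i, hy0' i, hx1 i, hy1 i⟩
    | succ t ih =>
        intro ht i
        have htq : t ≤ q := by omega
        have h5 := ih htq
        have hmono : SN ((s' - 1) * q + t) ⊆ SN ((s' - 1) * q + (t + 1)) := SN_mono (by omega)
        have hvt1 : ∀ j, HF T (SN ((s' - 1) * q + (t + 1))) (v ((t + 1 : ℕ) : ℤ) s' j) := by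
          intro j
          have hxt1 : HF T (SN ((s' - 1) * q + (t + 1))) (x (t + 1) s' j) :=
            ((h5 j).2.2.2.1).mono hmono
          have hxt : HF T (SN ((s' - 1) * q + (t + 1))) (x t s' j) := ((h5 j).2.1).mono hmono
          have hτ' : ∀ l : Fin B, HF T (SN ((s' - 1) * q + (t + 1))) (τ (t + 1) s' j l) :=
            fun l => hfτ (t + 1) s' (by omega) ht hs' j l _ (by omega)
          have hsum : HF T (SN ((s' - 1) * q + (t + 1)))
              (fun ω => ∑ l, (gradient (f j (τ (t + 1) s' j l ω)) (x (t + 1) s' j ω)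
                - gradient (f j (τ (t + 1) s' j l ω)) (x t s' j ω))) := by
            refine HF.sum Finset.univ (fun l _ => ?_)
            have hpair := hxt1.comp₂ hxt Prod.mk
            exact (hτ' l).comp₂ hpair
              (fun jj uw => gradient (f j jj) uw.1 - gradient (f j jj) uw.2)
          have hvt : HF T (SN ((s' - 1) * q + (t + 1))) (v (t : ℤ) s' j) :=
            ((h5 j).1).mono hmono
          have hh := hsum.comp₂ hvt (fun u w => (B : ℝ)⁻¹ • u + w)
          refine hh.congr (fun ω => ?_)
          have h := hvrec s' hs' (t + 1) (by omega) ht j ω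
          have hc : ((t + 1 : ℕ) : ℤ) - 1 = (t : ℤ) := by push_cast; ring
          rw [hc] at h
          simpa using h
        have hyt2 : ∀ j, HF T (SN ((s' - 1) * q + (t + 1))) (y (t + 2) s' j) := by
          intro j
          have hsum : HF T (SN ((s' - 1) * q + (t + 1))) (fun ω => ∑ r, W j r • y (t + 1) s' r ω) :=
            HF.sum Finset.univ (fun r _ => (((h5 r).2.2.2.2).mono hmono).comp (fun u => W j r • u))
          have hvt : HF T (SN ((s' - 1) * q + (t + 1))) (v (t : ℤ) s' j) :=
            ((h5 j).1).mono hmono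
          have hh := (hsum.comp₂ (hvt1 j) (fun u w => u + w)).comp₂ hvt (fun u w => u - w)
          refine hh.congr (fun ω => ?_)
          have h := hyrec s' hs' (t + 1) ht j ω
          have hc : ((t + 1 : ℕ) : ℤ) - 1 = (t : ℤ) := by push_cast; ring
          rw [hc] at h
          simpa using h
        have hxt2 : ∀ j, HF T (SN ((s' - 1) * q + (t + 1))) (x (t + 2) s' j) := by
          intro j
          have hsum : HF T (SN ((s' - 1) * q + (t + 1))) (fun ω => ∑ r, W j r • x (t + 1) s' r ω) :=
            HF.sum Finset.univ (fun r _ =>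
              (((h5 r).2.2.2.1).mono hmono).comp (fun u => W j r • u))
          have hh := hsum.comp₂ (hyt2 j) (fun u w => u - α • w)
          refine hh.congr (fun ω => ?_)
          simpa using hxrec s' hs' (t + 1) ht j ω
        exact ⟨hvt1 i, ((h5 i).2.2.2.1).mono hmono, ((h5 i).2.2.2.2).mono hmono,
          hxt2 i, hyt2 i⟩
  -- epoch induction for the base case
  have rep : ∀ s' : ℕ, 1 ≤ s' →
      ∀ i, HF T (SN ((s' - 1) * q)) (x 0 s' i) ∧ HF T (SN ((s' - 1) * q)) (y 0 s' i) ∧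
        HF T (SN ((s' - 1) * q)) (v (-1) s' i) := by
    intro s'
    induction s' with
    | zero => omega
    | succ s'' ih =>
        intro _ i
        by_cases h1 : s'' = 0
        · subst h1
          exact ⟨(HF.const _ x0).congr (fun ω => hx0 i ω),
                 (HF.const _ 0).congr (fun ω => hy0 i ω),
                 (HF.const _ 0).congr (fun ω => hvm1 i ω)⟩
        · have hs'' : 1 ≤ s'' := by omega
          have hstep := step s'' hs'' (fun j => ih hs'' j) q (le_refl q)
          have heq : (s'' - 1) * q + q = s'' * q := by
            have h2 : s'' - 1 + 1 = s'' := Nat.sub_add_cancel hs''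
            calc (s'' - 1) * q + q = (s'' - 1 + 1) * q := by ring
              _ = s'' * q := by rw [h2]
          simp only [heq] at hstep
          have heq2 : (s'' + 1 - 1) * q = s'' * q := by simp
          rw [heq2]
          exact ⟨((hstep i).2.2.2.1).congr (fun ω => hxcarry s'' hs'' i ω),
                 ((hstep i).2.2.2.2).congr (fun ω => hycarry s'' hs'' i ω),
                 ((hstep i).1).congr (fun ω => hvcarry s'' hs'' i ω)⟩
  have Φ := step s hs (rep s hs)
  -- HF at the big index set
  have hSB : ∀ t : ℕ, t ≤ q → (s - 1) * q + t ≤ s * q := by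
    intro t ht
    have h2 : s - 1 + 1 = s := Nat.sub_add_cancel hs
    have h3 : (s - 1 + 1) * q = (s - 1) * q + q := Nat.succ_mul _ _
    rw [h2] at h3
    omega
  have hfxS : ∀ t : ℕ, t ≤ q → ∀ i, HF T (SN (s * q)) (x t s i) :=
    fun t ht i => ((Φ t ht i).2.1).mono (SN_mono (hSB t ht))
  have hfvS : ∀ t : ℕ, t ≤ q → ∀ i, HF T (SN (s * q)) (v (t : ℤ) s i) :=
    fun t ht i => ((Φ t ht i).1).mono (SN_mono (hSB t ht))
  have hfτS : ∀ t, 1 ≤ t → t ≤ q → ∀ i l, HF T (SN (s * q)) (τ t s i l) :=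
    fun t h1 h2 i l => hfτ t s h1 h2 hs i l _ (hSB t h2)
  set e : ℕ → Ω → EuclideanSpace ℝ (Fin p) := fun t ω =>
    (n : ℝ)⁻¹ • ∑ i, v (t : ℤ) s i ω - (n : ℝ)⁻¹ • ∑ i, gradient (fI i) (x t s i ω) with hedef
  set D : ℕ → Fin n → Fin B → Ω → EuclideanSpace ℝ (Fin p) := fun t i l ω =>
    (gradient (f i (τ t s i l ω)) (x t s i ω) - gradient (f i (τ t s i l ω)) (x (t - 1) s i ω))
      - (gradient (fI i) (x t s i ω) - gradient (fI i) (x (t - 1) s i ω)) with hDdef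
  have hfe : ∀ t : ℕ, t ≤ q → HF T (SN (s * q)) (e t) := by
    intro t ht
    have h1 : HF T (SN (s * q)) (fun ω => ∑ i, v (t : ℤ) s i ω) :=
      HF.sum Finset.univ (fun i _ => hfvS t ht i)
    have h2 : HF T (SN (s * q)) (fun ω => ∑ i, gradient (fI i) (x t s i ω)) :=
      HF.sum Finset.univ (fun i _ => (hfxS t ht i).comp (fun u => gradient (fI i) u))
    exact (h1.comp₂ h2 (fun u w => (n : ℝ)⁻¹ • u - (n : ℝ)⁻¹ • w)).congr (fun ω => rfl)
  have hfD : ∀ t : ℕ, 1 ≤ t → t ≤ q → ∀ i l, HF T (SN (s * q)) (D t i l) := by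
    intro t h1 h2 i l
    have hx1 := hfxS t h2 i
    have hx2 := hfxS (t - 1) (by omega) i
    have hτ' := hfτS t h1 h2 i l
    exact ((hτ'.comp₂ (hx1.comp₂ hx2 Prod.mk) (fun jj uw =>
      (gradient (f i jj) uw.1 - gradient (f i jj) uw.2)
        - (gradient (fI i) uw.1 - gradient (fI i) uw.2)))).congr (fun ω => rfl)
  -- gradient identities
  have hgrad : ∀ i (u : EuclideanSpace ℝ (Fin p)),
      gradient (fI i) u = (m : ℝ)⁻¹ • ∑ j, gradient (f i j) u := by
    intro i u
    rw [hfI i]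
    exact gradient_const_mul_sum _ (hdiff i) _ u
  have hDsum0 : ∀ i (u w : EuclideanSpace ℝ (Fin p)),
      ∑ j, ((gradient (f i j) u - gradient (f i j) w)
        - (gradient (fI i) u - gradient (fI i) w)) = 0 := by
    intro i u w
    rw [Finset.sum_sub_distrib, Finset.sum_const, Finset.card_univ, Fintype.card_fin,
      hgrad i u, hgrad i w, Finset.sum_sub_distrib, ← smul_sub,
      ← Nat.cast_smul_eq_nsmul ℝ m, smul_smul, mul_inv_cancel₀ hmR, one_smul, sub_self]
  -- average identities
  have claimB : ∀ s' : ℕ, 1 ≤ s' → (∀ ω, ∑ i, y 0 s' i ω = ∑ i, v (-1) s' i ω) →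
      ∀ t : ℕ, t ≤ q → ∀ ω, ∑ i, y (t + 1) s' i ω = ∑ i, v (t : ℤ) s' i ω := by
    intro s' hs' hA t
    have hWsum : ∀ (z : Fin n → EuclideanSpace ℝ (Fin p)),
        ∑ i, ∑ r, W i r • z r = ∑ r, z r := by
      intro z
      rw [Finset.sum_comm]
      refine Finset.sum_congr rfl fun r _ => ?_
      rw [← Finset.sum_smul, hWcol r, one_smul]
    induction t with
    | zero =>
        intro _ ω
        have h := fun i => hyrec s' hs' 0 (by omega) i ω
        calc ∑ i, y (0 + 1) s' i ω
            = ∑ i, ((∑ r, W i r • y 0 s' r ω) + v ((0 : ℕ) : ℤ) s' i ω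
                - v (((0 : ℕ) : ℤ) - 1) s' i ω) := Finset.sum_congr rfl fun i _ => h i
          _ = ∑ i, v ((0 : ℕ) : ℤ) s' i ω := by
              rw [Finset.sum_sub_distrib, Finset.sum_add_distrib, hWsum]
              have hc : ((0 : ℕ) : ℤ) - 1 = (-1 : ℤ) := by norm_num
              rw [hc, ← hA ω]
              abel
    | succ t ih =>
        intro ht ω
        have htq : t ≤ q := by omega
        have h := fun i => hyrec s' hs' (t + 1) ht i ω
        have hc : ((t + 1 : ℕ) : ℤ) - 1 = (t : ℤ) := by push_cast; ring
        calc ∑ i, y (t + 1 + 1) s' i ω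
            = ∑ i, ((∑ r, W i r • y (t + 1) s' r ω) + v ((t + 1 : ℕ) : ℤ) s' i ω
                - v (((t + 1 : ℕ) : ℤ) - 1) s' i ω) := Finset.sum_congr rfl fun i _ => h i
          _ = ∑ i, v ((t + 1 : ℕ) : ℤ) s' i ω := by
              rw [Finset.sum_sub_distrib, Finset.sum_add_distrib, hWsum, hc, ih htq ω]
              abel
  have claimA : ∀ s' : ℕ, 1 ≤ s' → ∀ ω, ∑ i, y 0 s' i ω = ∑ i, v (-1) s' i ω := by
    intro s'
    induction s' with
    | zero => omega
    | succ s'' ih =>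
        intro _ ω
        by_cases h1 : s'' = 0
        · subst h1
          simp [hy0, hvm1]
        · have hs'' : 1 ≤ s'' := by omega
          calc ∑ i, y 0 (s'' + 1) i ω = ∑ i, y (q + 1) s'' i ω :=
                Finset.sum_congr rfl fun i _ => hycarry s'' hs'' i ω
            _ = ∑ i, v (q : ℤ) s'' i ω := claimB s'' hs'' (ih hs'') q (le_refl q) ω
            _ = ∑ i, v (-1) (s'' + 1) i ω :=
                (Finset.sum_congr rfl fun i _ => (hvcarry s'' hs'' i ω).symm)
  -- x-average recursion
  have hxavg : ∀ t : ℕ, t ≤ q → ∀ ω,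
      ∑ i, x (t + 1) s i ω = ∑ i, x t s i ω - α • ∑ i, v (t : ℤ) s i ω := by
    intro t ht ω
    have hWsum : ∀ (z : Fin n → EuclideanSpace ℝ (Fin p)),
        ∑ i, ∑ r, W i r • z r = ∑ r, z r := by
      intro z
      rw [Finset.sum_comm]
      refine Finset.sum_congr rfl fun r _ => ?_
      rw [← Finset.sum_smul, hWcol r, one_smul]
    calc ∑ i, x (t + 1) s i ω
        = ∑ i, ((∑ r, W i r • x t s r ω) - α • y (t + 1) s i ω) :=
          Finset.sum_congr rfl fun i _ => hxrec s hs t ht i ω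
      _ = ∑ i, x t s i ω - α • ∑ i, y (t + 1) s i ω := by
          rw [Finset.sum_sub_distrib, hWsum, Finset.smul_sum]
      _ = ∑ i, x t s i ω - α • ∑ i, v (t : ℤ) s i ω := by
          rw [claimB s hs (claimA s hs) t ht ω]
  -- e 0 = 0
  have he0 : ∀ ω, e 0 ω = 0 := by
    intro ω
    show (n : ℝ)⁻¹ • ∑ i, v ((0 : ℕ) : ℤ) s i ω
        - (n : ℝ)⁻¹ • ∑ i, gradient (fI i) (x 0 s i ω) = 0
    have h1 : ∑ i, v ((0 : ℕ) : ℤ) s i ω = ∑ i, gradient (fI i) (x 0 s i ω) := by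
      refine Finset.sum_congr rfl fun i _ => ?_
      rw [Nat.cast_zero, hv0 s hs i ω]
    rw [h1, sub_self]
  -- e recursion
  have herec : ∀ t : ℕ, 1 ≤ t → t ≤ q → ∀ ω,
      e t ω = e (t - 1) ω + ((n : ℝ)⁻¹ * (B : ℝ)⁻¹) • ∑ i, ∑ l, D t i l ω := by
    intro t h1 h2 ω
    have hc : ((t : ℕ) : ℤ) - 1 = ((t - 1 : ℕ) : ℤ) := by omega
    have hv2 : ∀ i, v (t : ℤ) s i ω
        = (B : ℝ)⁻¹ • (∑ l, (gradient (f i (τ t s i l ω)) (x t s i ω)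
            - gradient (f i (τ t s i l ω)) (x (t - 1) s i ω)))
          + v ((t - 1 : ℕ) : ℤ) s i ω := by
      intro i
      rw [hvrec s hs t h1 h2 i ω, hc]
    have hA : ∑ i, v (t : ℤ) s i ω
        = (B : ℝ)⁻¹ • (∑ i, ∑ l, (gradient (f i (τ t s i l ω)) (x t s i ω)
            - gradient (f i (τ t s i l ω)) (x (t - 1) s i ω)))
          + ∑ i, v ((t - 1 : ℕ) : ℤ) s i ω := by
      rw [Finset.smul_sum, ← Finset.sum_add_distrib]
      exact Finset.sum_congr rfl fun i _ => hv2 i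
    have hD2 : ∑ i, ∑ l, D t i l ω
        = (∑ i, ∑ l, (gradient (f i (τ t s i l ω)) (x t s i ω)
            - gradient (f i (τ t s i l ω)) (x (t - 1) s i ω)))
          - (B : ℝ) • (∑ i, gradient (fI i) (x t s i ω)
              - ∑ i, gradient (fI i) (x (t - 1) s i ω)) := by
      have hι : ∀ i, ∑ l, D t i l ω
          = (∑ l, (gradient (f i (τ t s i l ω)) (x t s i ω)
              - gradient (f i (τ t s i l ω)) (x (t - 1) s i ω)))
            - (B : ℝ) • (gradient (fI i) (x t s i ω) - gradient (fI i) (x (t - 1) s i ω)) := by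
        intro i
        show ∑ l : Fin B, ((gradient (f i (τ t s i l ω)) (x t s i ω)
            - gradient (f i (τ t s i l ω)) (x (t - 1) s i ω))
          - (gradient (fI i) (x t s i ω) - gradient (fI i) (x (t - 1) s i ω))) = _
        rw [Finset.sum_sub_distrib, Finset.sum_const, Finset.card_univ, Fintype.card_fin,
          ← Nat.cast_smul_eq_nsmul ℝ B]
      rw [Finset.sum_congr rfl fun i (_ : i ∈ Finset.univ) => hι i, Finset.sum_sub_distrib,
        ← Finset.smul_sum, Finset.sum_sub_distrib]
    show (n : ℝ)⁻¹ • ∑ i, v (t : ℤ) s i ω - (n : ℝ)⁻¹ • ∑ i, gradient (fI i) (x t s i ω)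
        = ((n : ℝ)⁻¹ • ∑ i, v ((t - 1 : ℕ) : ℤ) s i ω
            - (n : ℝ)⁻¹ • ∑ i, gradient (fI i) (x (t - 1) s i ω))
          + ((n : ℝ)⁻¹ * (B : ℝ)⁻¹) • ∑ i, ∑ l, D t i l ω
    rw [hA, hD2]
    match_scalars <;> (field_simp; try ring)
  -- pathwise bound on increments
  have hdx : ∀ t : ℕ, 1 ≤ t → t ≤ q → ∀ ω,
      ∑ i, ‖x t s i ω - x (t - 1) s i ω‖ ^ 2
        ≤ 3 * ∑ i, ‖x t s i ω - (n : ℝ)⁻¹ • ∑ i', x t s i' ω‖ ^ 2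
          + 3 * ∑ i, ‖x (t - 1) s i ω - (n : ℝ)⁻¹ • ∑ i', x (t - 1) s i' ω‖ ^ 2
          + 3 * n * α ^ 2 * ‖(n : ℝ)⁻¹ • ∑ i, v ((t - 1 : ℕ) : ℤ) s i ω‖ ^ 2 := by
    intro t h1 h2 ω
    have havg : (n : ℝ)⁻¹ • ∑ i', x t s i' ω
        = (n : ℝ)⁻¹ • ∑ i', x (t - 1) s i' ω
          - α • ((n : ℝ)⁻¹ • ∑ i', v ((t - 1 : ℕ) : ℤ) s i' ω) := by
      have h := hxavg (t - 1) (by omega) ω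
      rw [Nat.sub_add_cancel h1] at h
      rw [h, smul_sub, smul_comm]
    have key : ∀ i, ‖x t s i ω - x (t - 1) s i ω‖ ^ 2
        ≤ 3 * (‖x t s i ω - (n : ℝ)⁻¹ • ∑ i', x t s i' ω‖ ^ 2
          + ‖x (t - 1) s i ω - (n : ℝ)⁻¹ • ∑ i', x (t - 1) s i' ω‖ ^ 2
          + α ^ 2 * ‖(n : ℝ)⁻¹ • ∑ i', v ((t - 1 : ℕ) : ℤ) s i' ω‖ ^ 2) := by
      intro i
      have hid : x t s i ω - x (t - 1) s i ω
          = (x t s i ω - (n : ℝ)⁻¹ • ∑ i', x t s i' ω)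
            + (-(x (t - 1) s i ω - (n : ℝ)⁻¹ • ∑ i', x (t - 1) s i' ω))
            + (-(α • ((n : ℝ)⁻¹ • ∑ i', v ((t - 1 : ℕ) : ℤ) s i' ω))) := by
        rw [havg]; abel
      calc ‖x t s i ω - x (t - 1) s i ω‖ ^ 2
          = ‖(x t s i ω - (n : ℝ)⁻¹ • ∑ i', x t s i' ω)
            + (-(x (t - 1) s i ω - (n : ℝ)⁻¹ • ∑ i', x (t - 1) s i' ω))
            + (-(α • ((n : ℝ)⁻¹ • ∑ i', v ((t - 1 : ℕ) : ℤ) s i' ω)))‖ ^ 2 := by rw [← hid]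
        _ ≤ 3 * (‖x t s i ω - (n : ℝ)⁻¹ • ∑ i', x t s i' ω‖ ^ 2
            + ‖-(x (t - 1) s i ω - (n : ℝ)⁻¹ • ∑ i', x (t - 1) s i' ω)‖ ^ 2
            + ‖-(α • ((n : ℝ)⁻¹ • ∑ i', v ((t - 1 : ℕ) : ℤ) s i' ω))‖ ^ 2) :=
          norm_add3_sq_le _ _ _
        _ = 3 * (‖x t s i ω - (n : ℝ)⁻¹ • ∑ i', x t s i' ω‖ ^ 2
            + ‖x (t - 1) s i ω - (n : ℝ)⁻¹ • ∑ i', x (t - 1) s i' ω‖ ^ 2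
            + α ^ 2 * ‖(n : ℝ)⁻¹ • ∑ i', v ((t - 1 : ℕ) : ℤ) s i' ω‖ ^ 2) := by
          rw [norm_neg, norm_neg, norm_smul, Real.norm_eq_abs, mul_pow, sq_abs]
    calc ∑ i, ‖x t s i ω - x (t - 1) s i ω‖ ^ 2
        ≤ ∑ i : Fin n, (3 * (‖x t s i ω - (n : ℝ)⁻¹ • ∑ i', x t s i' ω‖ ^ 2
          + ‖x (t - 1) s i ω - (n : ℝ)⁻¹ • ∑ i', x (t - 1) s i' ω‖ ^ 2
          + α ^ 2 * ‖(n : ℝ)⁻¹ • ∑ i', v ((t - 1 : ℕ) : ℤ) s i' ω‖ ^ 2)) :=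
          Finset.sum_le_sum fun i _ => key i
      _ = 3 * ∑ i, ‖x t s i ω - (n : ℝ)⁻¹ • ∑ i', x t s i' ω‖ ^ 2
          + 3 * ∑ i, ‖x (t - 1) s i ω - (n : ℝ)⁻¹ • ∑ i', x (t - 1) s i' ω‖ ^ 2
          + 3 * n * α ^ 2 * ‖(n : ℝ)⁻¹ • ∑ i, v ((t - 1 : ℕ) : ℤ) s i ω‖ ^ 2 := by
        rw [← Finset.mul_sum, Finset.sum_add_distrib, Finset.sum_add_distrib,
          Finset.sum_const, Finset.card_univ, Fintype.card_fin, nsmul_eq_mul]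
        ring
  -- sharp HF facts
  have hxSharp : ∀ t : ℕ, 1 ≤ t → t ≤ q → ∀ i,
      HF T (SN ((s - 1) * q + (t - 1))) (x t s i) := by
    intro t h1 h2 i
    have h := (Φ (t - 1) (by omega) i).2.2.2.1
    rwa [Nat.sub_add_cancel h1] at h
  have hfeSharp : ∀ t : ℕ, t ≤ q → HF T (SN ((s - 1) * q + t)) (e t) := by
    intro t ht
    have h1 : HF T (SN ((s - 1) * q + t)) (fun ω => ∑ i, v (t : ℤ) s i ω) :=
      HF.sum Finset.univ (fun i _ => (Φ t ht i).1)
    have h2 : HF T (SN ((s - 1) * q + t)) (fun ω => ∑ i, gradient (fI i) (x t s i ω)) :=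
      HF.sum Finset.univ (fun i _ => ((Φ t ht i).2.1).comp (fun u => gradient (fI i) u))
    exact (h1.comp₂ h2 (fun u w => (n : ℝ)⁻¹ • u - (n : ℝ)⁻¹ • w)).congr (fun ω => rfl)
  -- cross terms vanish
  have keyz : ∀ t : ℕ, ∀ (h1 : 1 ≤ t) (h2 : t ≤ q), ∀ (i : Fin n) (l : Fin B)
      (S : Finset ({u : ℕ × ℕ // 1 ≤ u.1 ∧ u.1 ≤ q ∧ 1 ≤ u.2} × Fin n × Fin B)),
      ((⟨(t, s), h1, h2, hs⟩, i, l) :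
        {u : ℕ × ℕ // 1 ≤ u.1 ∧ u.1 ≤ q ∧ 1 ≤ u.2} × Fin n × Fin B) ∉ S →
      ∀ u : Ω → EuclideanSpace ℝ (Fin p), HF T S u → HF T S (x t s i) → HF T S (x (t - 1) s i) →
      ∫ ω, ⟪u ω, D t i l ω⟫ ∂μ = 0 := by
    intro t h1 h2 i l S hk0 u hu hx1 hx2
    have hg : HF T S (fun ω => (u ω, x t s i ω, x (t - 1) s i ω)) :=
      hu.comp₂ (hx1.comp₂ hx2 Prod.mk) Prod.mk
    have hz := hf_integral_zero (μ := μ) hmN hTindep hTmeas hk0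
      (fun j => hτunif t s i l h1 h2 hs j) hg
      (fun a j => ⟪a.1, (gradient (f i j) a.2.1 - gradient (f i j) a.2.2)
        - (gradient (fI i) a.2.1 - gradient (fI i) a.2.2)⟫)
      (fun a => by rw [← inner_sum, hDsum0 i a.2.1 a.2.2, inner_zero_right])
    exact hz
  -- diagonal bound
  have keyd : ∀ t : ℕ, ∀ (h1 : 1 ≤ t) (h2 : t ≤ q), ∀ (i : Fin n) (l : Fin B),
      ∫ ω, ‖D t i l ω‖ ^ 2 ∂μ ≤ ∫ ω, L ^ 2 * ‖x t s i ω - x (t - 1) s i ω‖ ^ 2 ∂μ := by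
    intro t h1 h2 i l
    have hk0 : ((⟨(t, s), h1, h2, hs⟩, i, l) :
        {u : ℕ × ℕ // 1 ≤ u.1 ∧ u.1 ≤ q ∧ 1 ≤ u.2} × Fin n × Fin B)
          ∉ SN ((s - 1) * q + (t - 1)) := by
      rw [mem_SN]
      simp only [not_le]
      omega
    have hg : HF T (SN ((s - 1) * q + (t - 1))) (fun ω => (x t s i ω, x (t - 1) s i ω)) :=
      (hxSharp t h1 h2 i).comp₂ ((Φ (t - 1) (by omega) i).2.1) Prod.mk
    have hle := hf_integral_eval (μ := μ) hmN hTindep hTmeas hk0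
      (fun j => hτunif t s i l h1 h2 hs j) hg
      (fun a j => ‖(gradient (f i j) a.1 - gradient (f i j) a.2)
        - (gradient (fI i) a.1 - gradient (fI i) a.2)‖ ^ 2)
      (fun a => L ^ 2 * ‖a.1 - a.2‖ ^ 2)
      (fun a => by
        have hc : gradient (fI i) a.1 - gradient (fI i) a.2
            = (m : ℝ)⁻¹ • ∑ j, (gradient (f i j) a.1 - gradient (f i j) a.2) := by
          rw [hgrad i a.1, hgrad i a.2, ← smul_sub, Finset.sum_sub_distrib]
        calc (m : ℝ)⁻¹ * ∑ j, ‖(gradient (f i j) a.1 - gradient (f i j) a.2)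
              - (gradient (fI i) a.1 - gradient (fI i) a.2)‖ ^ 2
            = (m : ℝ)⁻¹ * ∑ j, ‖(gradient (f i j) a.1 - gradient (f i j) a.2)
              - (m : ℝ)⁻¹ • ∑ j', (gradient (f i j') a.1 - gradient (f i j') a.2)‖ ^ 2 := by
              rw [hc]
          _ ≤ (m : ℝ)⁻¹ * ∑ j, ‖gradient (f i j) a.1 - gradient (f i j) a.2‖ ^ 2 :=
              avg_var_le hmN _
          _ ≤ L ^ 2 * ‖a.1 - a.2‖ ^ 2 := hsmooth i a.1 a.2)
    exact hle
  have hInt : ∀ g : Ω → ℝ, HF T (SN (s * q)) g → Integrable g μ :=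
    fun g hg => hg.integrable hTmeas
  have hexp : ∀ (a b : EuclideanSpace ℝ (Fin p)) (c : ℝ),
      ‖a + c • b‖ ^ 2 = ‖a‖ ^ 2 + (2 * c) * ⟪a, b⟫ + c ^ 2 * ⟪b, b⟫ := by
    intro a b c
    rw [norm_add_sq_real, real_inner_smul_right, norm_smul, Real.norm_eq_abs, mul_pow, sq_abs,
      real_inner_self_eq_norm_sq]
    ring
  have hptw : ∀ t : ℕ, 1 ≤ t → t ≤ q → ∀ ω,
      ‖e t ω‖ ^ 2 = ‖e (t - 1) ω‖ ^ 2
        + (2 * ((n : ℝ)⁻¹ * (B : ℝ)⁻¹)) * (∑ i, ∑ l, ⟪e (t - 1) ω, D t i l ω⟫)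
        + ((n : ℝ)⁻¹ * (B : ℝ)⁻¹) ^ 2
            * (∑ i, ∑ l, ∑ i', ∑ l', ⟪D t i' l' ω, D t i l ω⟫) := by
    intro t h1 h2 ω
    rw [herec t h1 h2 ω, hexp]
    simp only [inner_sum, sum_inner]
  set Cq : ℕ → ℝ := fun t =>
    ∫ ω, ∑ i, ‖x t s i ω - (n : ℝ)⁻¹ • ∑ i', x t s i' ω‖ ^ 2 ∂μ with hCq
  set Vq : ℕ → ℝ := fun t => ∫ ω, ‖(n : ℝ)⁻¹ • ∑ i, v (t : ℤ) s i ω‖ ^ 2 ∂μ with hVq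
  have hfxc : ∀ t : ℕ, t ≤ q → ∀ i, HF T (SN (s * q))
      (fun ω => ‖x t s i ω - (n : ℝ)⁻¹ • ∑ i', x t s i' ω‖ ^ 2) := by
    intro t ht i
    have hsum : HF T (SN (s * q)) (fun ω => ∑ i', x t s i' ω) :=
      HF.sum Finset.univ (fun i' _ => hfxS t ht i')
    exact (hfxS t ht i).comp₂ hsum (fun u w => ‖u - (n : ℝ)⁻¹ • w‖ ^ 2)
  have hfvn : ∀ t : ℕ, t ≤ q → HF T (SN (s * q))
      (fun ω => ‖(n : ℝ)⁻¹ • ∑ i, v (t : ℤ) s i ω‖ ^ 2) :=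
    fun t ht => (HF.sum Finset.univ (fun i _ => hfvS t ht i)).comp
      (fun u => ‖(n : ℝ)⁻¹ • u‖ ^ 2)
  have hkey : ∀ t : ℕ, 1 ≤ t → t ≤ q →
      ∫ ω, ‖e t ω‖ ^ 2 ∂μ ≤ ∫ ω, ‖e (t - 1) ω‖ ^ 2 ∂μ
        + (L ^ 2 / ((n : ℝ) ^ 2 * B))
            * (3 * Cq t + 3 * Cq (t - 1) + 3 * n * α ^ 2 * Vq (t - 1)) := by
    intro t h1 h2
    have htm : t - 1 ≤ q := by omega
    have hfet1 : HF T (SN (s * q)) (e (t - 1)) := hfe (t - 1) htm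
    have hfDt : ∀ i l, HF T (SN (s * q)) (D t i l) := fun i l => hfD t h1 h2 i l
    have hIe : Integrable (fun ω => ‖e (t - 1) ω‖ ^ 2) μ :=
      hInt _ (hfet1.comp (fun u => ‖u‖ ^ 2))
    have hIinner : ∀ i l, Integrable (fun ω => ⟪e (t - 1) ω, D t i l ω⟫) μ :=
      fun i l => hInt _ (hfet1.comp₂ (hfDt i l) (fun u w => ⟪u, w⟫))
    have hIDD : ∀ i l i' l', Integrable (fun ω => ⟪D t i l ω, D t i' l' ω⟫) μ :=
      fun i l i' l' => hInt _ ((hfDt i l).comp₂ (hfDt i' l') (fun u w => ⟪u, w⟫))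
    have hIX : Integrable (fun ω => ∑ i, ∑ l, ⟪e (t - 1) ω, D t i l ω⟫) μ :=
      integrable_finset_sum _ (fun i _ => integrable_finset_sum _ (fun l _ => hIinner i l))
    have hIY : Integrable
        (fun ω => ∑ i, ∑ l, ∑ i', ∑ l', ⟪D t i' l' ω, D t i l ω⟫) μ :=
      integrable_finset_sum _ (fun i _ => integrable_finset_sum _ (fun l _ =>
        integrable_finset_sum _ (fun i' _ => integrable_finset_sum _ (fun l' _ =>
          hIDD i' l' i l))))
    have hsplit : ∫ ω, ‖e t ω‖ ^ 2 ∂μ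
        = ∫ ω, ‖e (t - 1) ω‖ ^ 2 ∂μ
          + (2 * ((n : ℝ)⁻¹ * (B : ℝ)⁻¹))
              * ∫ ω, (∑ i, ∑ l, ⟪e (t - 1) ω, D t i l ω⟫) ∂μ
          + ((n : ℝ)⁻¹ * (B : ℝ)⁻¹) ^ 2
              * ∫ ω, (∑ i, ∑ l, ∑ i', ∑ l', ⟪D t i' l' ω, D t i l ω⟫) ∂μ := by
      rw [integral_congr_ae (Filter.Eventually.of_forall (hptw t h1 h2))]
      have hIg : Integrable (fun ω => 2 * ((n : ℝ)⁻¹ * (B : ℝ)⁻¹)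
          * ∑ i, ∑ l, ⟪e (t - 1) ω, D t i l ω⟫) μ := hIX.const_mul _
      have hIh : Integrable (fun ω => ((n : ℝ)⁻¹ * (B : ℝ)⁻¹) ^ 2
          * ∑ i, ∑ l, ∑ i', ∑ l', ⟪D t i' l' ω, D t i l ω⟫) μ := hIY.const_mul _
      have hIfg : Integrable (fun ω => ‖e (t - 1) ω‖ ^ 2 + 2 * ((n : ℝ)⁻¹ * (B : ℝ)⁻¹)
          * ∑ i, ∑ l, ⟪e (t - 1) ω, D t i l ω⟫) μ := hIe.add hIg
      rw [integral_add hIfg hIh, integral_add hIe hIg, integral_const_mul, integral_const_mul]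
    have hXzero : ∫ ω, (∑ i, ∑ l, ⟪e (t - 1) ω, D t i l ω⟫) ∂μ = 0 := by
      rw [integral_finset_sum _ (fun i _ => integrable_finset_sum _ (fun l _ => hIinner i l))]
      refine Finset.sum_eq_zero fun i _ => ?_
      rw [integral_finset_sum _ (fun l _ => hIinner i l)]
      refine Finset.sum_eq_zero fun l _ => ?_
      have hk0 : ((⟨(t, s), h1, h2, hs⟩, i, l) :
          {u : ℕ × ℕ // 1 ≤ u.1 ∧ u.1 ≤ q ∧ 1 ≤ u.2} × Fin n × Fin B)
            ∉ SN ((s - 1) * q + (t - 1)) := by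
        rw [mem_SN]; simp only [not_le]; omega
      exact keyz t h1 h2 i l _ hk0 (e (t - 1)) (hfeSharp (t - 1) htm)
        (hxSharp t h1 h2 i) ((Φ (t - 1) htm i).2.1)
    have hY : ∫ ω, (∑ i, ∑ l, ∑ i', ∑ l', ⟪D t i' l' ω, D t i l ω⟫) ∂μ
        = ∑ i, ∑ l, ∫ ω, ‖D t i l ω‖ ^ 2 ∂μ := by
      have hflip : (fun ω => ∑ i, ∑ l, ∑ i', ∑ l', ⟪D t i' l' ω, D t i l ω⟫)
          = (fun ω => ∑ i, ∑ l, ∑ i', ∑ l', ⟪D t i l ω, D t i' l' ω⟫) :=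
        funext fun ω => Finset.sum_congr rfl fun i _ => Finset.sum_congr rfl fun l _ =>
          Finset.sum_congr rfl fun i' _ => Finset.sum_congr rfl fun l' _ =>
            real_inner_comm _ _
      rw [hflip]
      rw [integral_finset_sum _ (fun i _ => integrable_finset_sum _ (fun l _ =>
        integrable_finset_sum _ (fun i' _ => integrable_finset_sum _ (fun l' _ =>
          hIDD i l i' l'))))]
      refine Finset.sum_congr rfl fun i _ => ?_
      rw [integral_finset_sum _ (fun l _ => integrable_finset_sum _ (fun i' _ =>
        integrable_finset_sum _ (fun l' _ => hIDD i l i' l')))]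
      refine Finset.sum_congr rfl fun l _ => ?_
      rw [integral_finset_sum _ (fun i' _ => integrable_finset_sum _ (fun l' _ =>
        hIDD i l i' l'))]
      have hoff : ∀ i' l', ¬(i' = i ∧ l' = l) →
          ∫ ω, ⟪D t i l ω, D t i' l' ω⟫ ∂μ = 0 := by
        intro i' l' hne
        have hk0' : ((⟨(t, s), h1, h2, hs⟩, i', l') :
            {u : ℕ × ℕ // 1 ≤ u.1 ∧ u.1 ≤ q ∧ 1 ≤ u.2} × Fin n × Fin B)
              ∉ insert (⟨(t, s), h1, h2, hs⟩, i, l) (SN ((s - 1) * q + (t - 1))) := by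
          intro hmem
          rcases Finset.mem_insert.mp hmem with hl | hr
          · apply hne
            have h1' := congrArg Prod.snd hl
            simp only [Prod.mk.injEq] at h1'
            exact ⟨h1'.1, h1'.2⟩
          · rw [mem_SN] at hr
            simp only at hr
            omega
        have hsub := Finset.subset_insert
          ((⟨(t, s), h1, h2, hs⟩, i, l) :
            {u : ℕ × ℕ // 1 ≤ u.1 ∧ u.1 ≤ q ∧ 1 ≤ u.2} × Fin n × Fin B)
          (SN ((s - 1) * q + (t - 1)))
        have hτ' : HF T (insert (⟨(t, s), h1, h2, hs⟩, i, l) (SN ((s - 1) * q + (t - 1))))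
            (τ t s i l) := HF.of_mem (Finset.mem_insert_self _ _)
        have hx1' := (hxSharp t h1 h2 i).mono hsub
        have hx2' := ((Φ (t - 1) htm i).2.1).mono hsub
        have hDins : HF T (insert (⟨(t, s), h1, h2, hs⟩, i, l)
            (SN ((s - 1) * q + (t - 1)))) (D t i l) :=
          ((hτ'.comp₂ (hx1'.comp₂ hx2' Prod.mk) (fun jj uw =>
            (gradient (f i jj) uw.1 - gradient (f i jj) uw.2)
              - (gradient (fI i) uw.1 - gradient (fI i) uw.2)))).congr (fun ω => rfl)
        exact keyz t h1 h2 i' l' _ hk0' (D t i l) hDins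
          ((hxSharp t h1 h2 i').mono hsub) (((Φ (t - 1) htm i').2.1).mono hsub)
      have hdiag : ∫ ω, ⟪D t i l ω, D t i l ω⟫ ∂μ = ∫ ω, ‖D t i l ω‖ ^ 2 ∂μ := by
        refine integral_congr_ae (Filter.Eventually.of_forall fun ω => ?_)
        show ⟪D t i l ω, D t i l ω⟫ = ‖D t i l ω‖ ^ 2
        rw [real_inner_self_eq_norm_sq]
      rw [Finset.sum_eq_single i]
      · rw [integral_finset_sum _ (fun l' _ => hIDD i l i l'), Finset.sum_eq_single l]
        · exact hdiag
        · intro l' _ hll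
          exact hoff i l' (by tauto)
        · intro habs; exact absurd (Finset.mem_univ l) habs
      · intro i' _ hii
        rw [integral_finset_sum _ (fun l' _ => hIDD i l i' l')]
        exact Finset.sum_eq_zero fun l' _ => hoff i' l' (by tauto)
      · intro habs; exact absurd (Finset.mem_univ i) habs
    -- diagonal bound and increment bound
    have hIdiff : ∀ i, Integrable
        (fun ω => ‖x t s i ω - x (t - 1) s i ω‖ ^ 2) μ :=
      fun i => hInt _ ((hfxS t h2 i).comp₂ (hfxS (t - 1) htm i) (fun u w => ‖u - w‖ ^ 2))
    have hdiagsum : ∑ i, ∑ l : Fin B, ∫ ω, ‖D t i l ω‖ ^ 2 ∂μ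
        ≤ (B : ℝ) * (L ^ 2 * ∫ ω, ∑ i, ‖x t s i ω - x (t - 1) s i ω‖ ^ 2 ∂μ) := by
      have h1' : ∀ i, ∑ l : Fin B, ∫ ω, ‖D t i l ω‖ ^ 2 ∂μ
          ≤ (B : ℝ) * (L ^ 2 * ∫ ω, ‖x t s i ω - x (t - 1) s i ω‖ ^ 2 ∂μ) := by
        intro i
        have h2' : ∀ l : Fin B, ∫ ω, ‖D t i l ω‖ ^ 2 ∂μ
            ≤ L ^ 2 * ∫ ω, ‖x t s i ω - x (t - 1) s i ω‖ ^ 2 ∂μ := by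
          intro l
          have := keyd t h1 h2 i l
          rwa [integral_const_mul] at this
        calc ∑ l : Fin B, ∫ ω, ‖D t i l ω‖ ^ 2 ∂μ
            ≤ ∑ l : Fin B, L ^ 2 * ∫ ω, ‖x t s i ω - x (t - 1) s i ω‖ ^ 2 ∂μ :=
              Finset.sum_le_sum fun l _ => h2' l
          _ = (B : ℝ) * (L ^ 2 * ∫ ω, ‖x t s i ω - x (t - 1) s i ω‖ ^ 2 ∂μ) := by
              rw [Finset.sum_const, Finset.card_univ, Fintype.card_fin, nsmul_eq_mul]
      calc ∑ i, ∑ l : Fin B, ∫ ω, ‖D t i l ω‖ ^ 2 ∂μ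
          ≤ ∑ i, (B : ℝ) * (L ^ 2 * ∫ ω, ‖x t s i ω - x (t - 1) s i ω‖ ^ 2 ∂μ) :=
            Finset.sum_le_sum fun i _ => h1' i
        _ = (B : ℝ) * (L ^ 2 * ∫ ω, ∑ i, ‖x t s i ω - x (t - 1) s i ω‖ ^ 2 ∂μ) := by
            rw [integral_finset_sum _ (fun i _ => hIdiff i), ← Finset.mul_sum, ← Finset.mul_sum]
    have hXd : ∫ ω, ∑ i, ‖x t s i ω - x (t - 1) s i ω‖ ^ 2 ∂μ
        ≤ 3 * Cq t + 3 * Cq (t - 1) + 3 * n * α ^ 2 * Vq (t - 1) := by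
      have hIL : Integrable (fun ω => ∑ i, ‖x t s i ω - x (t - 1) s i ω‖ ^ 2) μ :=
        integrable_finset_sum _ (fun i _ => hIdiff i)
      have hIC : ∀ t' : ℕ, t' ≤ q → Integrable
          (fun ω => ∑ i, ‖x t' s i ω - (n : ℝ)⁻¹ • ∑ i', x t' s i' ω‖ ^ 2) μ :=
        fun t' ht' => integrable_finset_sum _ (fun i _ => hInt _ (hfxc t' ht' i))
      have hIV : Integrable (fun ω => ‖(n : ℝ)⁻¹ • ∑ i, v ((t - 1 : ℕ) : ℤ) s i ω‖ ^ 2) μ :=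
        hInt _ (hfvn (t - 1) htm)
      have hIR : Integrable (fun ω =>
          3 * ∑ i, ‖x t s i ω - (n : ℝ)⁻¹ • ∑ i', x t s i' ω‖ ^ 2
          + 3 * ∑ i, ‖x (t - 1) s i ω - (n : ℝ)⁻¹ • ∑ i', x (t - 1) s i' ω‖ ^ 2
          + 3 * n * α ^ 2 * ‖(n : ℝ)⁻¹ • ∑ i, v ((t - 1 : ℕ) : ℤ) s i ω‖ ^ 2) μ :=
        (((hIC t h2).const_mul _).add ((hIC (t - 1) htm).const_mul _)).add (hIV.const_mul _)
      have hmono := integral_mono hIL hIR (fun ω => hdx t h1 h2 ω)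
      calc ∫ ω, ∑ i, ‖x t s i ω - x (t - 1) s i ω‖ ^ 2 ∂μ
          ≤ ∫ ω, (3 * ∑ i, ‖x t s i ω - (n : ℝ)⁻¹ • ∑ i', x t s i' ω‖ ^ 2
            + 3 * ∑ i, ‖x (t - 1) s i ω - (n : ℝ)⁻¹ • ∑ i', x (t - 1) s i' ω‖ ^ 2
            + 3 * n * α ^ 2 * ‖(n : ℝ)⁻¹ • ∑ i, v ((t - 1 : ℕ) : ℤ) s i ω‖ ^ 2) ∂μ := hmono
        _ = 3 * Cq t + 3 * Cq (t - 1) + 3 * n * α ^ 2 * Vq (t - 1) := by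
            have hI1 : Integrable (fun ω =>
                3 * ∑ i, ‖x t s i ω - (n : ℝ)⁻¹ • ∑ i', x t s i' ω‖ ^ 2) μ :=
              (hIC t h2).const_mul _
            have hI2 : Integrable (fun ω =>
                3 * ∑ i, ‖x (t - 1) s i ω - (n : ℝ)⁻¹ • ∑ i', x (t - 1) s i' ω‖ ^ 2) μ :=
              (hIC (t - 1) htm).const_mul _
            have hI3 : Integrable (fun ω =>
                3 * n * α ^ 2 * ‖(n : ℝ)⁻¹ • ∑ i, v ((t - 1 : ℕ) : ℤ) s i ω‖ ^ 2) μ :=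
              hIV.const_mul _
            have hI12 : Integrable (fun ω =>
                3 * ∑ i, ‖x t s i ω - (n : ℝ)⁻¹ • ∑ i', x t s i' ω‖ ^ 2
                + 3 * ∑ i, ‖x (t - 1) s i ω - (n : ℝ)⁻¹ • ∑ i', x (t - 1) s i' ω‖ ^ 2) μ :=
              hI1.add hI2
            rw [integral_add hI12 hI3, integral_add hI1 hI2, integral_const_mul,
              integral_const_mul, integral_const_mul]
    have hc2pos : (0 : ℝ) ≤ ((n : ℝ)⁻¹ * (B : ℝ)⁻¹) ^ 2 := sq_nonneg _
    calc ∫ ω, ‖e t ω‖ ^ 2 ∂μ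
        = ∫ ω, ‖e (t - 1) ω‖ ^ 2 ∂μ
          + ((n : ℝ)⁻¹ * (B : ℝ)⁻¹) ^ 2 * ∑ i, ∑ l, ∫ ω, ‖D t i l ω‖ ^ 2 ∂μ := by
          rw [hsplit, hXzero, hY]; ring
      _ ≤ ∫ ω, ‖e (t - 1) ω‖ ^ 2 ∂μ
          + ((n : ℝ)⁻¹ * (B : ℝ)⁻¹) ^ 2 * ((B : ℝ)
            * (L ^ 2 * ∫ ω, ∑ i, ‖x t s i ω - x (t - 1) s i ω‖ ^ 2 ∂μ)) := by
          exact add_le_add_right (mul_le_mul_of_nonneg_left hdiagsum hc2pos) _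
      _ = ∫ ω, ‖e (t - 1) ω‖ ^ 2 ∂μ
          + (L ^ 2 / ((n : ℝ) ^ 2 * B))
            * ∫ ω, ∑ i, ‖x t s i ω - x (t - 1) s i ω‖ ^ 2 ∂μ := by
          field_simp
      _ ≤ ∫ ω, ‖e (t - 1) ω‖ ^ 2 ∂μ
          + (L ^ 2 / ((n : ℝ) ^ 2 * B))
            * (3 * Cq t + 3 * Cq (t - 1) + 3 * n * α ^ 2 * Vq (t - 1)) := by
          refine add_le_add_right (mul_le_mul_of_nonneg_left hXd ?_) _
          positivity
  -- nonnegativity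
  have hCnn : ∀ t : ℕ, 0 ≤ Cq t := fun t =>
    integral_nonneg (fun ω => Finset.sum_nonneg fun i _ => sq_nonneg _)
  have hVnn : ∀ t : ℕ, 0 ≤ Vq t := fun t => integral_nonneg (fun ω => sq_nonneg _)
  set κ : ℕ → ℝ := fun k => (L ^ 2 / ((n : ℝ) ^ 2 * B))
    * (3 * Cq (k + 1) + 3 * Cq k + 3 * n * α ^ 2 * Vq k) with hκ
  have hκnn : ∀ k : ℕ, 0 ≤ κ k := by
    intro k
    have h1 : (0:ℝ) ≤ L ^ 2 / ((n : ℝ) ^ 2 * B) := by positivity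
    have h2 : (0:ℝ) ≤ 3 * Cq (k + 1) + 3 * Cq k + 3 * n * α ^ 2 * Vq k := by
      have h3 : (0:ℝ) ≤ 3 * (n : ℝ) * α ^ 2 * Vq k :=
        mul_nonneg (by positivity) (hVnn k)
      linarith [hCnn (k + 1), hCnn k]
    exact mul_nonneg h1 h2
  have hbound : ∀ t : ℕ, t ≤ q → ∫ ω, ‖e t ω‖ ^ 2 ∂μ ≤ ∑ k ∈ range t, κ k := by
    intro t
    induction t with
    | zero =>
        intro _
        have : ∫ ω, ‖e 0 ω‖ ^ 2 ∂μ = 0 := by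
          have hz : (fun ω => ‖e 0 ω‖ ^ 2) = fun _ => (0:ℝ) := by
            funext ω; rw [he0 ω]; simp
          rw [hz, integral_zero]
        rw [this]
        simp
    | succ t ih =>
        intro ht
        have h1 := hkey (t + 1) (by omega) ht
        simp only [Nat.add_sub_cancel] at h1
        calc ∫ ω, ‖e (t + 1) ω‖ ^ 2 ∂μ
            ≤ ∫ ω, ‖e t ω‖ ^ 2 ∂μ + κ t := h1
          _ ≤ (∑ k ∈ range t, κ k) + κ t := add_le_add_left (ih (by omega)) _
          _ = ∑ k ∈ range (t + 1), κ k := (Finset.sum_range_succ κ t).symm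
  have hsum1 : ∑ t ∈ range (q + 1), ∫ ω, ‖e t ω‖ ^ 2 ∂μ ≤ (q : ℝ) * ∑ k ∈ range q, κ k := by
    calc ∑ t ∈ range (q + 1), ∫ ω, ‖e t ω‖ ^ 2 ∂μ
        ≤ ∑ t ∈ range (q + 1), ∑ k ∈ range t, κ k :=
          Finset.sum_le_sum fun t ht => hbound t (by
            have := Finset.mem_range.mp ht; omega)
      _ = ∑ t ∈ range q, ∑ k ∈ range (t + 1), κ k := by
          rw [Finset.sum_range_succ']
          simp
      _ ≤ ∑ t ∈ range q, ∑ k ∈ range q, κ k := by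
          refine Finset.sum_le_sum fun t ht => ?_
          refine Finset.sum_le_sum_of_subset_of_nonneg
            (Finset.range_subset_range.mpr (Finset.mem_range.mp ht)) (fun k _ _ => hκnn k)
      _ = (q : ℝ) * ∑ k ∈ range q, κ k := by
          rw [Finset.sum_const, Finset.card_range, nsmul_eq_mul]
  -- final arithmetic
  have hshift : ∑ k ∈ range q, Cq (k + 1) ≤ ∑ t ∈ range (q + 1), Cq t := by
    rw [Finset.sum_range_succ']
    have := hCnn 0
    linarith
  have hincl : ∑ k ∈ range q, Cq k ≤ ∑ t ∈ range (q + 1), Cq t :=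
    Finset.sum_le_sum_of_subset_of_nonneg (Finset.range_subset_range.mpr (by omega))
      (fun k _ _ => hCnn k)
  have hκsum : ∑ k ∈ range q, κ k
      ≤ (L ^ 2 / ((n : ℝ) ^ 2 * B)) * (6 * ∑ t ∈ range (q + 1), Cq t
        + 3 * n * α ^ 2 * ∑ k ∈ range q, Vq k) := by
    have hexp2 : ∑ k ∈ range q, κ k
        = (L ^ 2 / ((n : ℝ) ^ 2 * B)) * (3 * ∑ k ∈ range q, Cq (k + 1)
          + 3 * ∑ k ∈ range q, Cq k + 3 * n * α ^ 2 * ∑ k ∈ range q, Vq k) := by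
      rw [hκ, ← Finset.mul_sum]
      congr 1
      rw [Finset.sum_add_distrib, Finset.sum_add_distrib, ← Finset.mul_sum, ← Finset.mul_sum,
        ← Finset.mul_sum]
    rw [hexp2]
    have h1 : (0:ℝ) ≤ L ^ 2 / ((n : ℝ) ^ 2 * B) := by positivity
    refine mul_le_mul_of_nonneg_left ?_ h1
    nlinarith [hshift, hincl]
  have hfinal : ∑ t ∈ range (q + 1), ∫ ω, ‖e t ω‖ ^ 2 ∂μ
      ≤ (3 * q * α ^ 2 * L ^ 2 / (n * B)) * ∑ t ∈ range q, Vq t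
        + (6 * q * L ^ 2 / (n * B)) * ((∑ t ∈ range (q + 1), Cq t) / n) := by
    have hq0 : (0:ℝ) ≤ (q : ℝ) := Nat.cast_nonneg q
    calc ∑ t ∈ range (q + 1), ∫ ω, ‖e t ω‖ ^ 2 ∂μ
        ≤ (q : ℝ) * ∑ k ∈ range q, κ k := hsum1
      _ ≤ (q : ℝ) * ((L ^ 2 / ((n : ℝ) ^ 2 * B)) * (6 * ∑ t ∈ range (q + 1), Cq t
          + 3 * n * α ^ 2 * ∑ k ∈ range q, Vq k)) :=
            mul_le_mul_of_nonneg_left hκsum hq0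
      _ = (3 * q * α ^ 2 * L ^ 2 / (n * B)) * ∑ t ∈ range q, Vq t
          + (6 * q * L ^ 2 / (n * B)) * ((∑ t ∈ range (q + 1), Cq t) / n) := by
          field_simp
          ring
  calc ∑ t ∈ range (q + 1), ∫ ω, ‖(n : ℝ)⁻¹ • ∑ i, v (t : ℤ) s i ω
          - (n : ℝ)⁻¹ • ∑ i, gradient (fI i) (x t s i ω)‖ ^ 2 ∂μ
      = ∑ t ∈ range (q + 1), ∫ ω, ‖e t ω‖ ^ 2 ∂μ :=
        Finset.sum_congr rfl fun t _ => rfl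
    _ ≤ (3 * q * α ^ 2 * L ^ 2 / (n * B)) * ∑ t ∈ range q, Vq t
        + (6 * q * L ^ 2 / (n * B)) * ((∑ t ∈ range (q + 1), Cq t) / n) := hfinal
    _ = (3 * q * α ^ 2 * L ^ 2 / (n * B)) *
          ∑ t ∈ range q, ∫ ω, ‖(n : ℝ)⁻¹ • ∑ i, v (t : ℤ) s i ω‖ ^ 2 ∂μ
        + (6 * q * L ^ 2 / (n * B)) * ∑ t ∈ range (q + 1),
            ∫ ω, (∑ i, ‖x t s i ω - (n : ℝ)⁻¹ • ∑ i', x t s i' ω‖ ^ 2) / (n : ℝ) ∂μ := by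
        congr 1
        congr 1
        rw [Finset.sum_div]
        refine Finset.sum_congr rfl fun t _ => ?_
        rw [integral_div]
end
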